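/- arXiv:1809.01820 — 11 statements merged into one kernel-verified Lean document; each statement's English description precedes it below -/
import Mathlib

section
/- For all real numbers a, b > 0 and λ ∈ [0,1], with r = min(λ, 1-λ), one has r*(√a - √b)² ≤ (1-λ)a + λb - a^(1-λ)b^λ ≤ (1-r)*(√a - √b)². -/
open Real in
private lemma km_aux (a b l : ℝ) (ha : 0 < a) (hb : 0 < b)
    (hl0 : 0 ≤ l) (hl2 : l ≤ 1/2) :
    l * (Real.sqrt a - Real.sqrt b) ^ 2 ≤
      (1 - l) * a + l * b - a ^ (1 - l) * b ^ l ∧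
    (1 - l) * a + l * b - a ^ (1 - l) * b ^ l ≤
      (1 - l) * (Real.sqrt a - Real.sqrt b) ^ 2 := by
  have hab : (0:ℝ) ≤ a * b := by positivity
  have hs : Real.sqrt a * Real.sqrt b = Real.sqrt (a * b) :=
    (Real.sqrt_mul ha.le b).symm
  have hsq : (Real.sqrt a - Real.sqrt b) ^ 2 = a + b - 2 * Real.sqrt (a * b) := by
    have h1 : Real.sqrt a ^ 2 = a := Real.sq_sqrt ha.le
    have h2 : Real.sqrt b ^ 2 = b := Real.sq_sqrt hb.le
    nlinarith [hs]
  have hsr : Real.sqrt (a * b) = (a*b) ^ ((1:ℝ)/2) := Real.sqrt_eq_rpow _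
  constructor
  · -- lower bound: a^(1-l) b^l ≤ (1-2l) a + 2l √(ab)
    have key := Real.geom_mean_le_arith_mean2_weighted
      (by linarith : (0:ℝ) ≤ 1 - 2*l) (by linarith : (0:ℝ) ≤ 2*l)
      ha.le (Real.sqrt_nonneg (a*b)) (by ring)
    have heq : a ^ (1 - 2*l) * Real.sqrt (a*b) ^ (2*l) = a ^ (1-l) * b ^ l := by
      rw [hsr, ← Real.rpow_mul hab]
      rw [show ((1:ℝ)/2 * (2*l)) = l by ring]
      rw [Real.mul_rpow ha.le hb.le, ← mul_assoc, ← Real.rpow_add ha]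
      ring_nf
    rw [heq] at key
    rw [hsq]; linarith
  · -- upper bound: 2(1-l) √(ab) ≤ a^(1-l) b^l + (1-2l) b
    have h1l : (0:ℝ) < 1 - l := by linarith
    set t : ℝ := 1 / (2 * (1 - l)) with ht
    have ht0 : 0 ≤ t := by positivity
    have ht1 : 0 ≤ 1 - t := by
      rw [ht, sub_nonneg, div_le_one (by linarith)]; linarith
    have key := Real.geom_mean_le_arith_mean2_weighted
      ht0 ht1 (by positivity : (0:ℝ) ≤ a ^ (1-l) * b ^ l) hb.le (by ring)
    have he1 : (1-l)*t = 1/2 := by rw [ht]; field_simp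
    have he2 : l*t + (1-t) = 1/2 := by rw [ht]; field_simp; ring
    have heq : (a ^ (1-l) * b ^ l) ^ t * b ^ (1 - t) = Real.sqrt (a*b) := by
      rw [Real.mul_rpow (by positivity) (by positivity),
        ← Real.rpow_mul ha.le, ← Real.rpow_mul hb.le,
        mul_assoc, ← Real.rpow_add hb, he1, he2,
        ← Real.mul_rpow ha.le hb.le, ← hsr]
    rw [heq] at key
    have htt : 2*(1-l)*t = 1 := by rw [ht]; field_simp
    have key2 : 2*(1-l)*Real.sqrt (a*b) ≤ a ^ (1-l) * b ^ l + (1-2*l)*b := by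
      have h := mul_le_mul_of_nonneg_left key (by positivity : (0:ℝ) ≤ 2*(1-l))
      have hrhs : 2*(1-l)*(t * (a ^ (1-l) * b ^ l) + (1-t)*b)
          = a ^ (1-l) * b ^ l + (1-2*l)*b := by
        linear_combination (a ^ (1-l) * b ^ l - b) * htt
      linarith [hrhs ▸ h]
    rw [hsq]
    nlinarith [key2]

theorem kittaneh_manasrah (a b l : ℝ) (ha : 0 < a) (hb : 0 < b)
    (hl : l ∈ Set.Icc (0:ℝ) 1) :
    min l (1 - l) * (Real.sqrt a - Real.sqrt b) ^ 2 ≤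
      (1 - l) * a + l * b - a ^ (1 - l) * b ^ l ∧
    (1 - l) * a + l * b - a ^ (1 - l) * b ^ l ≤
      (1 - min l (1 - l)) * (Real.sqrt a - Real.sqrt b) ^ 2 := by
  obtain ⟨hl0, hl1⟩ := hl
  rcases le_or_gt l (1/2) with h | h
  · have hmin : min l (1-l) = l := min_eq_left (by linarith)
    rw [hmin]
    exact km_aux a b l ha hb hl0 h
  · have hmin : min l (1-l) = 1 - l := min_eq_right (by linarith)
    rw [hmin]
    have := km_aux b a (1-l) hb ha (by linarith) (by linarith)
    rw [show (1 - (1-l)) = l by ring] at this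
    constructor
    · calc (1-l) * (Real.sqrt a - Real.sqrt b)^2
          = (1-l) * (Real.sqrt b - Real.sqrt a)^2 := by ring
        _ ≤ l * b + (1-l) * a - b ^ l * a ^ (1-l) := this.1
        _ = (1-l) * a + l * b - a ^ (1-l) * b ^ l := by ring
    · calc (1-l) * a + l * b - a ^ (1-l) * b ^ l
          = l * b + (1-l) * a - b ^ l * a ^ (1-l) := by ring
        _ ≤ l * (Real.sqrt b - Real.sqrt a)^2 := this.2
        _ = (1 - (1-l)) * (Real.sqrt a - Real.sqrt b)^2 := by ring
end

section
/- For all real numbers a, b > 0 and λ ∈ [0,1], the Heinz mean is bounded above by the Heron mean with parameter (2λ-1)²: (a^(1-λ)b^λ + a^λb^(1-λ))/2 ≤ (1 - (2λ-1)²)√(ab) + (2λ-1)²(a+b)/2. -/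
lemma sinh_convexOn : ConvexOn ℝ (Set.Ici 0) Real.sinh := by
  apply convexOn_of_deriv2_nonneg (convex_Ici 0) Real.continuous_sinh.continuousOn
  · exact Real.differentiable_sinh.differentiableOn
  · rw [Real.deriv_sinh]; exact Real.differentiable_cosh.differentiableOn
  · intro x hx
    simp only [Function.iterate_succ, Function.iterate_zero, Function.comp_apply, id]
    rw [Real.deriv_sinh, Real.deriv_cosh]
    rw [interior_Ici] at hx
    exact (Real.sinh_pos_iff.mpr hx).le

lemma sinh_mul_le {ν w : ℝ} (h0 : 0 ≤ ν) (h1 : ν ≤ 1) (hw : 0 ≤ w) :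
    Real.sinh (ν * w) ≤ ν * Real.sinh w := by
  have := sinh_convexOn.2 (Set.mem_Ici.mpr hw) (Set.mem_Ici.mpr le_rfl) h0
    (by linarith : (0:ℝ) ≤ 1 - ν) (by ring)
  simpa [Real.sinh_zero] using this

lemma cosh_double (x : ℝ) : Real.cosh (2 * x) = 1 + 2 * Real.sinh x ^ 2 := by
  rw [Real.cosh_two_mul, Real.cosh_sq]; ring

lemma cosh_key {ν u : ℝ} (h0 : 0 ≤ ν) (h1 : ν ≤ 1) (hu : 0 ≤ u) :
    Real.cosh (ν * u) ≤ 1 - ν ^ 2 + ν ^ 2 * Real.cosh u := by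
  have h2 : Real.cosh (ν * u) = 1 + 2 * Real.sinh (ν * (u / 2)) ^ 2 := by
    rw [← cosh_double]; congr 1; ring
  have h2' : Real.cosh u = 1 + 2 * Real.sinh (u / 2) ^ 2 := by
    rw [← cosh_double]; congr 1; ring
  have hs : Real.sinh (ν * (u / 2)) ≤ ν * Real.sinh (u / 2) :=
    sinh_mul_le h0 h1 (by linarith)
  have hs0 : 0 ≤ Real.sinh (ν * (u / 2)) := Real.sinh_nonneg_iff.mpr (by positivity)
  have hsq : Real.sinh (ν * (u / 2)) ^ 2 ≤ (ν * Real.sinh (u / 2)) ^ 2 :=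
    sq_le_sq' (by linarith) hs
  rw [h2, h2']
  nlinarith [hsq]

lemma cosh_key' {ν u : ℝ} (h1 : ν ^ 2 ≤ 1) :
    Real.cosh (ν * u) ≤ 1 - ν ^ 2 + ν ^ 2 * Real.cosh u := by
  have habs : |ν| ≤ 1 := by
    rw [← Real.sqrt_one, ← Real.sqrt_sq_eq_abs]
    exact Real.sqrt_le_sqrt h1
  have h := cosh_key (abs_nonneg ν) habs (abs_nonneg u)
  have e1 : Real.cosh (|ν| * |u|) = Real.cosh (ν * u) := by
    rw [← abs_mul, Real.cosh_abs]
  have e2 : Real.cosh |u| = Real.cosh u := Real.cosh_abs u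
  rw [e1, e2, sq_abs] at h
  exact h

theorem heinz_le_heron (a b l : ℝ) (ha : 0 < a) (hb : 0 < b)
    (hl : l ∈ Set.Icc (0:ℝ) 1) :
    (a ^ (1 - l) * b ^ l + a ^ l * b ^ (1 - l)) / 2 ≤
      (1 - (2 * l - 1) ^ 2) * Real.sqrt (a * b) + (2 * l - 1) ^ 2 * ((a + b) / 2) := by
  obtain ⟨hl0, hl1⟩ := hl
  set s := Real.log a with hs
  set t := Real.log b with ht
  set ν := 2 * l - 1 with hν
  set m := (s + t) / 2 with hm
  set u := (s - t) / 2 with hu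
  have hae : a = Real.exp s := (Real.exp_log ha).symm
  have hbe : b = Real.exp t := (Real.exp_log hb).symm
  have r1 : a ^ (1 - l) * b ^ l = Real.exp (m - ν * u) := by
    rw [Real.rpow_def_of_pos ha, Real.rpow_def_of_pos hb, ← Real.exp_add]
    congr 1
    rw [hm, hu, hν]; ring
  have r2 : a ^ l * b ^ (1 - l) = Real.exp (m + ν * u) := by
    rw [Real.rpow_def_of_pos ha, Real.rpow_def_of_pos hb, ← Real.exp_add]
    congr 1
    rw [hm, hu, hν]; ring
  have r3 : Real.sqrt (a * b) = Real.exp m := by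
    rw [hae, hbe, ← Real.exp_add, Real.sqrt_eq_rpow, ← Real.exp_mul]
    congr 1; rw [hm]; ring
  have r4 : (a + b) / 2 = Real.exp m * Real.cosh u := by
    rw [Real.cosh_eq, hae, hbe]
    have e1 : Real.exp s = Real.exp m * Real.exp u := by
      rw [← Real.exp_add]; congr 1; rw [hm, hu]; ring
    have e2 : Real.exp t = Real.exp m * Real.exp (-u) := by
      rw [← Real.exp_add]; congr 1; rw [hm, hu]; ring
    rw [e1, e2]; ring
  have r0 : (a ^ (1 - l) * b ^ l + a ^ l * b ^ (1 - l)) / 2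
      = Real.exp m * Real.cosh (ν * u) := by
    rw [r1, r2, Real.cosh_eq]
    have e1 : m - ν * u = m + -(ν * u) := by ring
    rw [e1, Real.exp_add, Real.exp_add]; ring
  rw [r0, r3, r4]
  have hν2 : ν ^ 2 ≤ 1 := by rw [hν]; nlinarith
  have key := cosh_key' (u := u) hν2
  have hexp : 0 < Real.exp m := Real.exp_pos m
  nlinarith [key, hexp, mul_le_mul_of_nonneg_left key hexp.le]
end

section
/- For all real numbers a, b > 0 and λ ∈ [0,1], (a^(1-λ)b^λ + a^λb^(1-λ))/2 + min(λ,1-λ)*(√a - √b)² ≤ (a+b)/2. -/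
lemma heinz_aux (a b l : ℝ) (ha : 0 < a) (hb : 0 < b)
    (hl0 : 0 ≤ l) (hl2 : l ≤ 1/2) :
    (a ^ (1 - l) * b ^ l + a ^ l * b ^ (1 - l)) / 2 +
      l * (Real.sqrt a - Real.sqrt b) ^ 2 ≤ (a + b) / 2 := by
  have hsa : Real.sqrt a = a ^ (1/2 : ℝ) := Real.sqrt_eq_rpow a
  have hsb : Real.sqrt b = b ^ (1/2 : ℝ) := Real.sqrt_eq_rpow b
  have hab : (0:ℝ) ≤ Real.sqrt a * Real.sqrt b := by positivity
  have key : (Real.sqrt a * Real.sqrt b) ^ (2*l) = a ^ l * b ^ l := by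
    rw [hsa, hsb, Real.mul_rpow (by positivity) (by positivity),
      ← Real.rpow_mul ha.le, ← Real.rpow_mul hb.le]
    rw [show (1:ℝ)/2 * (2 * l) = l by ring]
  have h1 : a ^ (1 - l) * b ^ l ≤ (1 - 2*l) * a + (2*l) * (Real.sqrt a * Real.sqrt b) := by
    have := Real.geom_mean_le_arith_mean2_weighted (w₁ := 1 - 2*l) (w₂ := 2*l)
      (p₁ := a) (p₂ := Real.sqrt a * Real.sqrt b) (by linarith) (by linarith) ha.le hab
      (by ring)
    calc a ^ (1 - l) * b ^ l = a ^ (1 - 2*l) * (Real.sqrt a * Real.sqrt b) ^ (2*l) := by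
          rw [key, ← mul_assoc, ← Real.rpow_add ha]; ring_nf
      _ ≤ _ := this
  have h2 : a ^ l * b ^ (1 - l) ≤ (1 - 2*l) * b + (2*l) * (Real.sqrt a * Real.sqrt b) := by
    have := Real.geom_mean_le_arith_mean2_weighted (w₁ := 1 - 2*l) (w₂ := 2*l)
      (p₁ := b) (p₂ := Real.sqrt a * Real.sqrt b) (by linarith) (by linarith) hb.le hab
      (by ring)
    calc a ^ l * b ^ (1 - l) = b ^ (1 - 2*l) * (Real.sqrt a * Real.sqrt b) ^ (2*l) := by
          rw [key, ← mul_assoc, mul_comm (b ^ (1-2*l)) (a ^ l), mul_assoc,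
            ← Real.rpow_add hb]; ring_nf
      _ ≤ _ := this
  have hqa : Real.sqrt a ^ 2 = a := Real.sq_sqrt ha.le
  have hqb : Real.sqrt b ^ 2 = b := Real.sq_sqrt hb.le
  nlinarith [h1, h2]

theorem heinz_plus_min (a b l : ℝ) (ha : 0 < a) (hb : 0 < b)
    (hl : l ∈ Set.Icc (0:ℝ) 1) :
    (a ^ (1 - l) * b ^ l + a ^ l * b ^ (1 - l)) / 2 +
      min l (1 - l) * (Real.sqrt a - Real.sqrt b) ^ 2 ≤ (a + b) / 2 := by
  obtain ⟨hl0, hl1⟩ := hl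
  rcases le_or_gt l (1/2) with h | h
  · rw [min_eq_left (by linarith)]
    exact heinz_aux a b l ha hb hl0 h
  · rw [min_eq_right (by linarith)]
    have := heinz_aux a b (1 - l) ha hb (by linarith) (by linarith)
    simpa [show 1 - (1 - l) = l by ring, add_comm, mul_comm] using this
end

section
/- For all real numbers a, b > 0 and λ ∈ [0,1], the Heinz mean satisfies the reverse inequality (a^(1-λ)b^λ + a^λb^(1-λ))/2 ≥ (a+b)/2 - (1/2)λ(1-λ)(b-a)log(b/a). -/
open Real

private lemma aux_nonneg (f f' : ℝ → ℝ) (hd : ∀ x, HasDerivAt f (f' x) x)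
    (h0 : f 0 = 0) (hpos : ∀ x, 0 ≤ x → 0 ≤ f' x) {x : ℝ} (hx : 0 ≤ x) : 0 ≤ f x := by
  have hmono : MonotoneOn f (Set.Ici 0) :=
    monotoneOn_of_deriv_nonneg (convex_Ici 0)
      (fun y _ => (hd y).continuousAt.continuousWithinAt)
      (fun y _ => (hd y).differentiableAt.differentiableWithinAt)
      (fun y hy => by
        rw [(hd y).deriv]
        refine hpos y ?_
        have : y ∈ Set.Ioi (0:ℝ) := by simpa using hy
        exact le_of_lt this)
  calc (0:ℝ) = f 0 := h0.symm
    _ ≤ f x := hmono Set.self_mem_Ici hx hx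

private lemma exp_sub_one_le (q : ℝ) : Real.exp q - 1 ≤ q * Real.exp q := by
  have h := Real.add_one_le_exp (-q)
  rw [Real.exp_neg] at h
  have hpo := Real.exp_pos q
  have hinv : (Real.exp q)⁻¹ * Real.exp q = 1 := inv_mul_cancel₀ (Real.exp_ne_zero q)
  nlinarith [mul_le_mul_of_nonneg_right h hpo.le]

private lemma psi_lemma (p : ℝ) (hp : 0 ≤ p) (q : ℝ) (hq : 0 ≤ q) :
    (2 + p + q) * (Real.exp q - 1) ≤ (2 + p) * (q * Real.exp q) := by
  have h := aux_nonneg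
    (fun q => (2 + p) * (q * Real.exp q) - (2 + p + q) * (Real.exp q - 1))
    (fun q => (1 + p) * (q * Real.exp q) - Real.exp q + 1)
    (fun y => by
      have h1 : HasDerivAt (fun q : ℝ => q * Real.exp q)
          (1 * Real.exp y + y * Real.exp y) y :=
        (hasDerivAt_id y).mul (Real.hasDerivAt_exp y)
      have h2 : HasDerivAt (fun q : ℝ => (2 + p) * (q * Real.exp q))
          ((2 + p) * (1 * Real.exp y + y * Real.exp y)) y := h1.const_mul _
      have h3 : HasDerivAt (fun q : ℝ => (2 + p + q)) 1 y := by
        simpa using (hasDerivAt_id y).const_add (2 + p)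
      have h4 : HasDerivAt (fun q : ℝ => Real.exp q - 1) (Real.exp y) y :=
        (Real.hasDerivAt_exp y).sub_const 1
      have h5 := h3.mul h4
      have := h2.sub h5
      exact this.congr_deriv (by ring))
    (by norm_num)
    (fun y hy => by
      show 0 ≤ (1 + p) * (y * Real.exp y) - Real.exp y + 1
      nlinarith [exp_sub_one_le y, mul_nonneg (mul_nonneg hp hy) (Real.exp_pos y).le])
    hq
  simpa using h

private lemma phi'_nonneg (q : ℝ) (hq : 0 ≤ q) (p : ℝ) (hp : 0 ≤ p) :
    0 ≤ q * (Real.exp (p + q) - 1) + p * q * Real.exp (p + q)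
      - (Real.exp p - 1) * (Real.exp q - 1) - (p + q) * Real.exp p * (Real.exp q - 1) := by
  have h := aux_nonneg
    (fun p => q * (Real.exp (p + q) - 1) + p * q * Real.exp (p + q)
      - (Real.exp p - 1) * (Real.exp q - 1) - (p + q) * Real.exp p * (Real.exp q - 1))
    (fun p => (2 + p) * q * Real.exp (p + q) - (2 + p + q) * Real.exp p * (Real.exp q - 1))
    (fun y => by
      have he : HasDerivAt (fun p : ℝ => Real.exp (p + q)) (Real.exp (y + q) * 1) y :=
        ((hasDerivAt_id y).add_const q).exp
      have h1 : HasDerivAt (fun p : ℝ => q * (Real.exp (p + q) - 1))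
          (q * (Real.exp (y + q) * 1)) y := (he.sub_const 1).const_mul q
      have h2 : HasDerivAt (fun p : ℝ => p * q) q y := by
        simpa using (hasDerivAt_id y).mul_const q
      have h3 : HasDerivAt (fun p : ℝ => p * q * Real.exp (p + q))
          (q * Real.exp (y + q) + y * q * (Real.exp (y + q) * 1)) y := h2.mul he
      have h4 : HasDerivAt (fun p : ℝ => (Real.exp p - 1) * (Real.exp q - 1))
          (Real.exp y * (Real.exp q - 1)) y :=
        ((Real.hasDerivAt_exp y).sub_const 1).mul_const _
      have h5 : HasDerivAt (fun p : ℝ => (p + q) * Real.exp p)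
          (1 * Real.exp y + (y + q) * Real.exp y) y :=
        ((hasDerivAt_id y).add_const q).mul (Real.hasDerivAt_exp y)
      have h6 : HasDerivAt (fun p : ℝ => (p + q) * Real.exp p * (Real.exp q - 1))
          ((1 * Real.exp y + (y + q) * Real.exp y) * (Real.exp q - 1)) y :=
        h5.mul_const _
      have := ((h1.add h3).sub h4).sub h6
      exact this.congr_deriv (by ring))
    (by norm_num)
    (fun y hy => by
      show 0 ≤ (2 + y) * q * Real.exp (y + q) - (2 + y + q) * Real.exp y * (Real.exp q - 1)
      have hpsi := psi_lemma y hy q hq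
      have h := mul_le_mul_of_nonneg_left hpsi (Real.exp_pos y).le
      rw [Real.exp_add]
      nlinarith [h])
    hp
  simpa using h

private lemma lemA (p q : ℝ) (hp : 0 ≤ p) (hq : 0 ≤ q) :
    (Real.exp p - 1) * (Real.exp q - 1) * (p + q) ≤ p * q * (Real.exp (p + q) - 1) := by
  have h := aux_nonneg
    (fun p => p * q * (Real.exp (p + q) - 1)
      - (p + q) * ((Real.exp p - 1) * (Real.exp q - 1)))
    (fun p => q * (Real.exp (p + q) - 1) + p * q * Real.exp (p + q)
      - (Real.exp p - 1) * (Real.exp q - 1) - (p + q) * Real.exp p * (Real.exp q - 1))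
    (fun y => by
      have he : HasDerivAt (fun p : ℝ => Real.exp (p + q)) (Real.exp (y + q) * 1) y :=
        ((hasDerivAt_id y).add_const q).exp
      have h2 : HasDerivAt (fun p : ℝ => p * q) q y := by
        simpa using (hasDerivAt_id y).mul_const q
      have h3 : HasDerivAt (fun p : ℝ => p * q * (Real.exp (p + q) - 1))
          (q * (Real.exp (y + q) - 1) + y * q * (Real.exp (y + q) * 1)) y :=
        h2.mul (he.sub_const 1)
      have h4 : HasDerivAt (fun p : ℝ => (Real.exp p - 1) * (Real.exp q - 1))
          (Real.exp y * (Real.exp q - 1)) y :=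
        ((Real.hasDerivAt_exp y).sub_const 1).mul_const _
      have h5 : HasDerivAt (fun p : ℝ => (p + q) * ((Real.exp p - 1) * (Real.exp q - 1)))
          (1 * ((Real.exp y - 1) * (Real.exp q - 1)) + (y + q) * (Real.exp y * (Real.exp q - 1))) y :=
        ((hasDerivAt_id y).add_const q).mul h4
      have := h3.sub h5
      exact this.congr_deriv (by ring))
    (by norm_num)
    (fun y hy => phi'_nonneg q hq y hy)
    hp
  nlinarith [h]

private lemma final_step (a x l E1 E2 E : ℝ) (ha : 0 < a)
    (key : (E1 - 1) * (E2 - 1) ≤ l * (1 - l) * x * (E - 1))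
    (hprodA : a * (E1 * E2) = a * E) :
    (a + a * E) / 2 - 1 / 2 * l * (1 - l) * (a * E - a) * x ≤ (a * E1 + a * E2) / 2 := by
  nlinarith [mul_le_mul_of_nonneg_left key ha.le, hprodA]

private lemma core_ineq (x l : ℝ) (hx : 0 ≤ x) (hl0 : 0 ≤ l) (hl1 : l ≤ 1) :
    (Real.exp (l * x) - 1) * (Real.exp ((1 - l) * x) - 1)
      ≤ l * (1 - l) * x * (Real.exp x - 1) := by
  rcases eq_or_lt_of_le hx with h0 | hxpos
  · rw [← h0]; simp
  · have hA := lemA (l * x) ((1 - l) * x) (mul_nonneg hl0 hx)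
      (mul_nonneg (by linarith) hx)
    have hsum : l * x + (1 - l) * x = x := by ring
    rw [hsum] at hA
    refine le_of_mul_le_mul_right ?_ hxpos
    nlinarith [hA]

theorem reverse_heinz (a b l : ℝ) (ha : 0 < a) (hb : 0 < b)
    (hl : l ∈ Set.Icc (0:ℝ) 1) :
    (a ^ (1 - l) * b ^ l + a ^ l * b ^ (1 - l)) / 2 ≥
      (a + b) / 2 - (1 / 2) * l * (1 - l) * (b - a) * Real.log (b / a) := by
  obtain ⟨hl0, hl1⟩ := hl
  wlog hab : a ≤ b generalizing a b with H
  · push_neg at hab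
    have h := H b a hb ha hab.le
    have hlog : Real.log (a / b) = - Real.log (b / a) := by
      rw [← Real.log_inv, inv_div]
    rw [hlog] at h
    ring_nf at h ⊢
    linarith
  rw [ge_iff_le, Real.log_div hb.ne' ha.ne']
  set x := Real.log b - Real.log a with hxval
  have hx0 : 0 ≤ x := sub_nonneg.2 (Real.log_le_log ha hab)
  have hba : b = a * Real.exp x := by
    rw [hxval, Real.exp_sub, Real.exp_log ha, Real.exp_log hb]
    field_simp
  have e1 : a ^ (1 - l) * b ^ l = a * Real.exp (l * x) := by
    rw [hxval, Real.rpow_def_of_pos ha, Real.rpow_def_of_pos hb, ← Real.exp_add]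
    have h2 : a * Real.exp (l * (Real.log b - Real.log a))
        = Real.exp (Real.log a + l * (Real.log b - Real.log a)) := by
      rw [Real.exp_add, Real.exp_log ha]
    rw [h2, Real.exp_eq_exp]
    ring
  have e2 : a ^ l * b ^ (1 - l) = a * Real.exp ((1 - l) * x) := by
    rw [hxval, Real.rpow_def_of_pos ha, Real.rpow_def_of_pos hb, ← Real.exp_add]
    have h2 : a * Real.exp ((1 - l) * (Real.log b - Real.log a))
        = Real.exp (Real.log a + (1 - l) * (Real.log b - Real.log a)) := by
      rw [Real.exp_add, Real.exp_log ha]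
    rw [h2, Real.exp_eq_exp]
    ring
  have key := core_ineq x l hx0 hl0 hl1
  have hprod : Real.exp (l * x) * Real.exp ((1 - l) * x) = Real.exp x := by
    rw [← Real.exp_add]
    ring_nf
  have hprodA : a * (Real.exp (l * x) * Real.exp ((1 - l) * x)) = a * Real.exp x := by
    rw [hprod]
  rw [e1, e2, hba]
  exact final_step a x l _ _ _ ha key hprodA
end

section
/- For all real numbers a, b > 0 and λ ∈ [0,1], with r = min(λ,1-λ), one has (HZ_λ(a,b))² ≥ ((a+b)/2)² - (1/2)(1-r)(a-b)², where HZ_λ(a,b) = (a^(1-λ)b^λ + a^λb^(1-λ))/2. -/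
theorem squared_reverse_heinz (a b l : ℝ) (ha : 0 < a) (hb : 0 < b)
    (hl : l ∈ Set.Icc (0:ℝ) 1) :
    ((a ^ (1 - l) * b ^ l + a ^ l * b ^ (1 - l)) / 2) ^ 2 ≥
      ((a + b) / 2) ^ 2 - (1 / 2) * (1 - min l (1 - l)) * (a - b) ^ 2 := by
  obtain ⟨h0, h1⟩ := hl
  set x := a ^ (1 - l) * b ^ l with hx
  set y := a ^ l * b ^ (1 - l) with hy
  have hxy : x * y = a * b := by
    rw [hx, hy, show a ^ (1-l) * b ^ l * (a ^ l * b ^ (1-l)) =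
      (a ^ (1-l) * a ^ l) * (b ^ l * b ^ (1-l)) by ring,
      ← Real.rpow_add ha, ← Real.rpow_add hb]
    norm_num
  have hr : min l (1 - l) ≤ 1/2 := by
    rcases le_total l (1-l) with h | h
    · rw [min_eq_left h]; linarith
    · rw [min_eq_right h]; linarith
  nlinarith [sq_nonneg (x - y), sq_nonneg (a - b), hxy]
end

section
/- Let a < b be real numbers and Φ : [a,b] → ℝ be convex. Then for all p ∈ [0,1]: Φ((a+b)/2) ≤ m(p) ≤ (1/(b-a)) ∫ₐᵇ Φ(t) dt ≤ M(p) ≤ (Φ(a)+Φ(b))/2, where m(p) = p·Φ((pb+(2-p)a)/2) + (1-p)·Φ(((1+p)b+(1-p)a)/2) and M(p) = (1/2)(Φ(pb+(1-p)a) + p·Φ(a) + (1-p)·Φ(b)). -/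
open MeasureTheory Set intervalIntegral

/-- A function convex on `Icc a b` is interval integrable on any subinterval. -/
lemma convexOn_intervalIntegrable {a b : ℝ} (hab : a ≤ b) {Φ : ℝ → ℝ}
    (hΦ : ConvexOn ℝ (Set.Icc a b) Φ) {u v : ℝ} (hu : a ≤ u) (huv : u ≤ v) (hv : v ≤ b) :
    IntervalIntegrable Φ volume u v := by
  have cont : ContinuousOn Φ (Set.Ioo a b) := by
    simpa [interior_Icc] using hΦ.continuousOn_interior
  set m : ℝ := (a + b) / 2 with hm
  have hmmem : m ∈ Set.Icc a b := ⟨by linarith, by linarith⟩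
  set K : ℝ := max (Φ a) (Φ b) with hK
  have hbound : ∀ x ∈ Set.Icc a b, |Φ x| ≤ |K| + |2 * Φ m - K| := by
    intro x hx
    have hup : Φ x ≤ K := hΦ.le_max_of_mem_Icc (left_mem_Icc.2 hab) (right_mem_Icc.2 hab) hx
    have hx' : a + b - x ∈ Set.Icc a b := ⟨by linarith [hx.2], by linarith [hx.1]⟩
    have hup' : Φ (a + b - x) ≤ K :=
      hΦ.le_max_of_mem_Icc (left_mem_Icc.2 hab) (right_mem_Icc.2 hab) hx'
    have hmid : Φ m ≤ (1/2) * Φ x + (1/2) * Φ (a + b - x) := by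
      have h2 := hΦ.2 hx hx' (by norm_num : (0:ℝ) ≤ 1/2) (by norm_num : (0:ℝ) ≤ 1/2) (by norm_num)
      have h : (1/2 : ℝ) • x + (1/2 : ℝ) • (a + b - x) = m := by
        simp [hm, smul_eq_mul]; ring
      rw [h] at h2
      simpa [smul_eq_mul] using h2
    have hlow : 2 * Φ m - K ≤ Φ x := by linarith
    have h1 := neg_abs_le (2 * Φ m - K)
    have h2 := le_abs_self K
    have h3 := abs_nonneg K
    have h4 := abs_nonneg (2 * Φ m - K)
    rw [abs_le]; constructor <;> linarith
  have hIoo : Set.Ioo u v ⊆ Set.Ioo a b := Set.Ioo_subset_Ioo hu hv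
  have meas : AEStronglyMeasurable Φ (volume.restrict (Set.Ioo u v)) :=
    (cont.mono hIoo).aestronglyMeasurable measurableSet_Ioo
  have fin : HasFiniteIntegral Φ (volume.restrict (Set.Ioo u v)) := by
    apply MeasureTheory.HasFiniteIntegral.restrict_of_bounded
      (C := |K| + |2 * Φ m - K|) (measure_Ioo_lt_top)
    filter_upwards [ae_restrict_mem measurableSet_Ioo] with x hx
    exact hbound x ⟨by linarith [hx.1], by linarith [hx.2]⟩
  have hIntIoo : IntegrableOn Φ (Set.Ioo u v) volume := ⟨meas, fin⟩
  rw [intervalIntegrable_iff_integrableOn_Ioo_of_le huv]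
  exact hIntIoo

/-- Hermite–Hadamard on a subinterval. -/
lemma hh_sub {a b : ℝ} (hab : a ≤ b) {Φ : ℝ → ℝ} (hΦ : ConvexOn ℝ (Set.Icc a b) Φ)
    {u v : ℝ} (hu : a ≤ u) (huv : u ≤ v) (hv : v ≤ b) :
    (v - u) * Φ ((u + v) / 2) ≤ ∫ t in u..v, Φ t ∧
      (∫ t in u..v, Φ t) ≤ (v - u) * ((Φ u + Φ v) / 2) := by
  rcases eq_or_lt_of_le huv with rfl | hlt
  · simp
  have hint : IntervalIntegrable Φ volume u v := convexOn_intervalIntegrable hab hΦ hu huv hv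
  have hmemIcc : ∀ x ∈ Set.Icc u v, x ∈ Set.Icc a b := fun x hx =>
    ⟨hu.trans hx.1, hx.2.trans hv⟩
  constructor
  · -- left inequality
    have hrefl : (∫ t in u..v, Φ (u + v - t)) = ∫ t in u..v, Φ t := by
      rw [intervalIntegral.integral_comp_sub_left Φ (u + v)]
      norm_num
    have hint2 : IntervalIntegrable (fun t => Φ (u + v - t)) volume u v := by
      have h := (hint.comp_sub_left (u + v))
      have h2 : IntervalIntegrable (fun x => Φ (u + v - x)) volume v u := by simpa using h
      exact h2.symm
    have hmono : (∫ t in u..v, Φ ((u + v) / 2)) ≤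
        ∫ t in u..v, ((1:ℝ)/2) * Φ t + ((1:ℝ)/2) * Φ (u + v - t) := by
      apply intervalIntegral.integral_mono_on huv intervalIntegrable_const
        ((hint.const_mul _).add (hint2.const_mul _))
      intro x hx
      have hx1 : x ∈ Set.Icc a b := hmemIcc x hx
      have hx2 : u + v - x ∈ Set.Icc a b := hmemIcc _ ⟨by linarith [hx.2], by linarith [hx.1]⟩
      have h2 := hΦ.2 hx1 hx2 (by norm_num : (0:ℝ) ≤ 1/2) (by norm_num : (0:ℝ) ≤ 1/2)
        (by norm_num)
      have h : (1/2 : ℝ) • x + (1/2 : ℝ) • (u + v - x) = (u + v) / 2 := by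
        simp [smul_eq_mul]; ring
      rw [h] at h2
      simpa [smul_eq_mul] using h2
    rw [intervalIntegral.integral_const, smul_eq_mul] at hmono
    rw [intervalIntegral.integral_add (hint.const_mul _) (hint2.const_mul _),
      intervalIntegral.integral_const_mul, intervalIntegral.integral_const_mul, hrefl] at hmono
    linarith
  · -- right inequality
    have hmono : (∫ t in u..v, Φ t) ≤
        ∫ t in u..v, ((v - t) / (v - u) * Φ u + (t - u) / (v - u) * Φ v) := by
      apply intervalIntegral.integral_mono_on huv hint
      · apply IntervalIntegrable.add
        · exact (((_root_.intervalIntegrable_const (c := v)).sub intervalIntegrable_id).div_const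
            _).mul_const _
        · exact ((intervalIntegrable_id.sub intervalIntegrable_const).div_const _).mul_const _
      intro x hx
      have h2 := hΦ.2 (hmemIcc u (Set.left_mem_Icc.2 huv)) (hmemIcc v (Set.right_mem_Icc.2 huv))
        (div_nonneg (by linarith [hx.2]) (by linarith) : (0:ℝ) ≤ (v - x) / (v - u))
        (div_nonneg (by linarith [hx.1]) (by linarith) : (0:ℝ) ≤ (x - u) / (v - u))
        (by rw [← add_div, show v - x + (x - u) = v - u by ring]; exact div_self (by linarith))
      have h : ((v - x) / (v - u)) • u + ((x - u) / (v - u)) • v = x := by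
        have hne : v - u ≠ 0 := by linarith
        rw [smul_eq_mul, smul_eq_mul, div_mul_eq_mul_div, div_mul_eq_mul_div, ← add_div, div_eq_iff hne]
        ring
      rw [h] at h2
      simpa [smul_eq_mul] using h2
    have hcalc : (∫ t in u..v, ((v - t) / (v - u) * Φ u + (t - u) / (v - u) * Φ v))
        = (v - u) * ((Φ u + Φ v) / 2) := by
      have hne : v - u ≠ 0 := by linarith
      have e1 : ∀ t : ℝ, (v - t) / (v - u) * Φ u + (t - u) / (v - u) * Φ v
          = (v * Φ u - u * Φ v) / (v - u) + ((Φ v - Φ u) / (v - u)) * t := by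
        intro t; field_simp; ring
      simp only [e1]
      rw [intervalIntegral.integral_add intervalIntegrable_const
        (intervalIntegrable_id.const_mul _), intervalIntegral.integral_const,
        intervalIntegral.integral_const_mul, integral_id, smul_eq_mul]
      field_simp
      ring
    linarith



theorem hermite_hadamard_refinement (a b : ℝ) (hab : a < b) (Φ : ℝ → ℝ)
    (hΦ : ConvexOn ℝ (Set.Icc a b) Φ) (p : ℝ) (hp : p ∈ Set.Icc (0:ℝ) 1) :
    Φ ((a + b) / 2) ≤
        p * Φ ((p * b + (2 - p) * a) / 2) +
          (1 - p) * Φ (((1 + p) * b + (1 - p) * a) / 2) ∧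
    p * Φ ((p * b + (2 - p) * a) / 2) +
          (1 - p) * Φ (((1 + p) * b + (1 - p) * a) / 2) ≤
        (1 / (b - a)) * ∫ t in a..b, Φ t ∧
    (1 / (b - a)) * ∫ t in a..b, Φ t ≤
        (1 / 2) * (Φ (p * b + (1 - p) * a) + p * Φ a + (1 - p) * Φ b) ∧
    (1 / 2) * (Φ (p * b + (1 - p) * a) + p * Φ a + (1 - p) * Φ b) ≤
        (Φ a + Φ b) / 2 := by
  obtain ⟨hp0, hp1⟩ := hp
  set c : ℝ := p * b + (1 - p) * a with hc
  have hac : a ≤ c := by nlinarith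
  have hcb : c ≤ b := by nlinarith
  have hL : (0:ℝ) < b - a := by linarith
  have ex : (p * b + (2 - p) * a) / 2 = (a + c) / 2 := by rw [hc]; ring
  have ey : ((1 + p) * b + (1 - p) * a) / 2 = (c + b) / 2 := by rw [hc]; ring
  have hxmem : (a + c) / 2 ∈ Set.Icc a b := ⟨by linarith, by linarith⟩
  have hymem : (c + b) / 2 ∈ Set.Icc a b := ⟨by linarith, by linarith⟩
  have H1 := hh_sub hab.le hΦ (le_refl a) hac hcb
  have H2 := hh_sub hab.le hΦ hac hcb (le_refl b)
  have hint1 : IntervalIntegrable Φ MeasureTheory.volume a c :=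
    convexOn_intervalIntegrable hab.le hΦ (le_refl a) hac hcb
  have hint2 : IntervalIntegrable Φ MeasureTheory.volume c b :=
    convexOn_intervalIntegrable hab.le hΦ hac hcb (le_refl b)
  have Iadd : (∫ t in a..c, Φ t) + (∫ t in c..b, Φ t) = ∫ t in a..b, Φ t :=
    intervalIntegral.integral_add_adjacent_intervals hint1 hint2
  rw [ex, ey]
  refine ⟨?_, ?_, ?_, ?_⟩
  · -- 1st
    have h2 := hΦ.2 hxmem hymem hp0 (by linarith : (0:ℝ) ≤ 1 - p) (by ring)
    have h : p • ((a + c) / 2) + (1 - p) • ((c + b) / 2) = (a + b) / 2 := by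
      simp only [smul_eq_mul, hc]; ring
    rw [h] at h2
    simpa [smul_eq_mul] using h2
  · -- 2nd
    have key : (p * Φ ((a + c) / 2) + (1 - p) * Φ ((c + b) / 2)) * (b - a)
        ≤ ∫ t in a..b, Φ t := by
      calc (p * Φ ((a + c) / 2) + (1 - p) * Φ ((c + b) / 2)) * (b - a)
          = (c - a) * Φ ((a + c) / 2) + (b - c) * Φ ((c + b) / 2) := by rw [hc]; ring
        _ ≤ (∫ t in a..c, Φ t) + (∫ t in c..b, Φ t) := add_le_add H1.1 H2.1
        _ = ∫ t in a..b, Φ t := Iadd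
    rw [one_div, inv_mul_eq_div]
    exact (le_div_iff₀ hL).2 key
  · -- 3rd
    have key : (∫ t in a..b, Φ t)
        ≤ (1 / 2 * (Φ c + p * Φ a + (1 - p) * Φ b)) * (b - a) := by
      calc (∫ t in a..b, Φ t) = (∫ t in a..c, Φ t) + (∫ t in c..b, Φ t) := Iadd.symm
        _ ≤ (c - a) * ((Φ a + Φ c) / 2) + (b - c) * ((Φ c + Φ b) / 2) :=
            add_le_add H1.2 H2.2
        _ = (1 / 2 * (Φ c + p * Φ a + (1 - p) * Φ b)) * (b - a) := by rw [hc]; ring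
    rw [one_div, inv_mul_eq_div]
    exact (div_le_iff₀ hL).2 key
  · -- 4th
    have h2 := hΦ.2 (Set.right_mem_Icc.2 hab.le) (Set.left_mem_Icc.2 hab.le) hp0
      (by linarith : (0:ℝ) ≤ 1 - p) (by ring)
    have h : p • b + (1 - p) • a = c := by simp only [smul_eq_mul, hc]
    rw [h] at h2
    simp only [smul_eq_mul] at h2
    linarith
end

section
/- For all real numbers a, b > 0, ∫₀¹ ((1-t)a + tb - ((1-t)/a + t/b)^(-1)) / (t(1-t)) dt = (a-b)(log a - log b). -/
theorem amh_integral (a b : ℝ) (ha : 0 < a) (hb : 0 < b) :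
    ∫ t in (0:ℝ)..1,
        ((1 - t) * a + t * b - ((1 - t) / a + t / b)⁻¹) / (t * (1 - t)) =
      (a - b) * (Real.log a - Real.log b) := by
  rcases eq_or_ne a b with rfl | hab
  · simp only [sub_self, zero_mul]
    have : ∀ t : ℝ, ((1 - t) * a + t * a - ((1 - t) / a + t / a)⁻¹) / (t * (1 - t)) = 0 := by
      intro t
      have h1 : (1 - t) / a + t / a = 1 / a := by field_simp; ring
      rw [h1]
      have : (1 - t) * a + t * a - (1 / a)⁻¹ = 0 := by field_simp; ring
      rw [this, zero_div]
    simp [this]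
  -- denominator positivity
  have hpos : ∀ t ∈ Set.Icc (0:ℝ) 1, 0 < t * a + (1 - t) * b := by
    intro t ht
    rcases ht with ⟨h0, h1⟩
    nlinarith [mul_nonneg h0 ha.le, mul_nonneg (sub_nonneg.mpr h1) hb.le]
  -- rewrite integrand
  have hcongr : ∫ t in (0:ℝ)..1,
      ((1 - t) * a + t * b - ((1 - t) / a + t / b)⁻¹) / (t * (1 - t)) =
      ∫ t in (0:ℝ)..1, (a - b)^2 / (t * a + (1 - t) * b) := by
    apply intervalIntegral.integral_congr_ae
    have hne : ∀ᵐ t : ℝ ∂MeasureTheory.volume, t ≠ 1 := by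
      rw [MeasureTheory.ae_iff]
      simp [Set.setOf_eq_eq_singleton']
    filter_upwards [hne] with t htne ht
    rw [Set.uIoc_of_le zero_le_one] at ht
    have h0 : (0:ℝ) < t := ht.1
    have h1 : t < 1 := lt_of_le_of_ne ht.2 htne
    have hd : 0 < t * a + (1 - t) * b := hpos t ⟨h0.le, h1.le⟩
    have hsum : 0 < (1 - t) / a + t / b :=
      add_pos (div_pos (by linarith) ha) (div_pos h0 hb)
    have h2 : (1 - t) * b + t * a ≠ 0 := by nlinarith
    have h3 : t * (1 - t) ≠ 0 := mul_ne_zero h0.ne' (by linarith)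
    have hX : ((1 - t) / a + t / b) = ((1 - t) * b + t * a) / (a * b) := by
      field_simp
    rw [hX, inv_div, div_eq_div_iff h3 hd.ne']
    field_simp
    ring
  rw [hcongr]
  have hF : ∀ t ∈ Set.uIcc (0:ℝ) 1,
      HasDerivAt (fun t => (a - b) * Real.log (t * a + (1 - t) * b))
        ((a - b)^2 / (t * a + (1 - t) * b)) t := by
    intro t ht
    rw [Set.uIcc_of_le zero_le_one] at ht
    have hd := hpos t ht
    have hg : HasDerivAt (fun t : ℝ => t * a + (1 - t) * b) (a - b) t := by
      have : HasDerivAt (fun t : ℝ => t * a + (1 - t) * b) (1 * a + (0 - 1) * b) t :=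
        ((hasDerivAt_id t).mul_const a).add
          (((hasDerivAt_const t (1:ℝ)).sub (hasDerivAt_id t)).mul_const b)
      convert this using 1; ring
    have := (hg.log hd.ne').const_mul (a - b)
    refine this.congr_deriv ?_
    ring
  have hcont : ContinuousOn (fun t : ℝ => (a - b)^2 / (t * a + (1 - t) * b))
      (Set.uIcc (0:ℝ) 1) := by
    apply ContinuousOn.div continuousOn_const
    · fun_prop
    · intro t ht
      rw [Set.uIcc_of_le zero_le_one] at ht
      exact (hpos t ht).ne'
  rw [intervalIntegral.integral_eq_sub_of_hasDerivAt hF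
    (hcont.intervalIntegrable)]
  simp
  ring
end

section
/- The function h(λ) = λ(1-λ) - (2λ-1)² sin(πλ)/π is nonnegative for all λ ∈ [0,1]. -/
theorem h_nonneg (l : ℝ) (hl : l ∈ Set.Icc (0:ℝ) 1) :
    0 ≤ l * (1 - l) - (2 * l - 1) ^ 2 * Real.sin (Real.pi * l) / Real.pi := by
  obtain ⟨h0, h1⟩ := hl
  have hπ := Real.pi_pos
  rw [sub_nonneg, div_le_iff₀ hπ]
  rcases le_or_gt l (1/2) with hc | hc
  · have hs : Real.sin (Real.pi * l) ≤ Real.pi * l :=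
      Real.sin_le (by positivity)
    nlinarith [mul_le_mul_of_nonneg_left hs (sq_nonneg (2*l-1)),
      mul_nonneg (mul_nonneg hπ.le (mul_nonneg h0 h0)) (by linarith : (0:ℝ) ≤ 3 - 4*l)]
  · have hs : Real.sin (Real.pi * l) ≤ Real.pi * (1 - l) := by
      have h2 : Real.sin (Real.pi * l) = Real.sin (Real.pi * (1 - l)) := by
        rw [mul_one_sub, Real.sin_pi_sub]
      rw [h2]; exact Real.sin_le (by nlinarith)
    nlinarith [mul_le_mul_of_nonneg_left hs (sq_nonneg (2*l-1)),
      mul_nonneg (mul_nonneg hπ.le (mul_nonneg (by linarith : (0:ℝ) ≤ 1-l) (by linarith : (0:ℝ) ≤ 1-l))) (by linarith : (0:ℝ) ≤ 4*l - 1)]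
end

section
/- For all real numbers a, b > 0 and λ ∈ [0,1]: (a^(1-λ)b^λ + a^λb^(1-λ))/2 ≥ (a+b)/2 - 2λ(1-λ)sin(πλ)(√a - √b)² - (2λ-1)²·(sin(πλ)/(2π))·(b-a)·log(b/a). -/
open Real

set_option maxHeartbeats 1000000

/-- lower bound for sin on [0,1] -/
lemma my_sin_lb {x : ℝ} (h0 : 0 ≤ x) (h1 : x ≤ 1) :
    x - x ^ 3 / 6 - x ^ 4 * (5 / 96) ≤ Real.sin x := by
  have hb := Real.sin_bound (x := x) (by rwa [abs_of_nonneg h0])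
  rw [abs_of_nonneg h0] at hb
  have := abs_le.mp hb
  linarith [this.1, this.2, pow_le_pow_of_le_one h0 h1 (show 4 ≤ 5 by omega), pow_nonneg h0 4]

lemma my_sin_ub {x : ℝ} (h0 : 0 ≤ x) (h1 : x ≤ 1) :
    Real.sin x ≤ x - x ^ 3 / 6 + x ^ 4 * (5 / 96) := by
  have hb := Real.sin_bound (x := x) (by rwa [abs_of_nonneg h0])
  rw [abs_of_nonneg h0] at hb
  have := abs_le.mp hb
  linarith [this.1, this.2, pow_le_pow_of_le_one h0 h1 (show 4 ≤ 5 by omega), pow_nonneg h0 4]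

lemma my_cos_lb {x : ℝ} (h0 : 0 ≤ x) (h1 : x ≤ 1) :
    1 - x ^ 2 / 2 - x ^ 4 * (5 / 96) ≤ Real.cos x := by
  have hb := Real.cos_bound (x := x) (by rwa [abs_of_nonneg h0])
  rw [abs_of_nonneg h0] at hb
  have := abs_le.mp hb
  linarith [this.1, this.2]

/-- quadruple angle formula -/
lemma my_cos_four (q : ℝ) :
    Real.cos (4 * q) = 1 - 8 * Real.sin q ^ 2 + 8 * Real.sin q ^ 4 := by
  rw [show (4 : ℝ) * q = 2 * (2 * q) by ring, Real.cos_two_mul, Real.cos_two_mul,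
    Real.cos_sq']
  ring

/-- Inequality (A) for μ ∈ [0,1]: (1-μ²)π ≤ cos(πμ/2)((1-μ²)π + 4μ²) -/
lemma lemA_s16 {μ : ℝ} (h0 : 0 ≤ μ) (h1 : μ ≤ 1) :
    (1 - μ ^ 2) * π ≤ Real.cos (π * μ / 2) * ((1 - μ ^ 2) * π + 4 * μ ^ 2) := by
  have hπl : 3.141592 < π := Real.pi_gt_d6
  have hπu : π < 3.141593 := Real.pi_lt_d6
  have hπ0 : 0 < π := Real.pi_pos
  have hμ2 : 0 ≤ 1 - μ ^ 2 := by nlinarith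
  have hX : 0 ≤ (1 - μ ^ 2) * π + 4 * μ ^ 2 := by positivity
  have hπ2u : π ^ 2 ≤ 9.8696088 := by
    linarith [mul_le_mul_of_nonneg_right hπu.le hπ0.le,
      mul_le_mul_of_nonneg_left hπu.le (by norm_num : (0:ℝ) ≤ 3.141593)]
  have hπ2l : (9.8696002 : ℝ) ≤ π ^ 2 := by
    linarith [mul_le_mul_of_nonneg_left hπl.le (by norm_num : (0:ℝ) ≤ 3.141592),
      mul_le_mul_of_nonneg_right hπl.le hπ0.le]
  rcases le_total μ (3 / 5) with hc | hc
  · -- region 1 : μ ≤ 3/5, use quadruple-angle lower bound for cos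
    obtain ⟨q, hqdef⟩ : ∃ q : ℝ, q = π * μ / 8 := ⟨_, rfl⟩
    have hq0 : 0 ≤ q := by rw [hqdef]; positivity
    have hq1 : q ≤ 0.2357 := by
      rw [hqdef]
      linarith [mul_le_mul_of_nonneg_right hπu.le h0]
    have hq2 : q ≤ 1 := by linarith
    have hslo := my_sin_lb hq0 hq2
    have hsub := my_sin_ub hq0 hq2
    have hsnn : 0 ≤ Real.sin q := Real.sin_nonneg_of_nonneg_of_le_pi hq0 (by linarith)
    have hq4 : q ^ 4 ≤ 0.2357 * q ^ 3 := by
      linarith [mul_le_mul_of_nonneg_left hq1 (pow_nonneg hq0 3)]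
    have hq3 : q ^ 3 ≤ q := by
      have := pow_le_pow_of_le_one hq0 hq2 (show 1 ≤ 3 by omega)
      simpa using this
    have hlo : q - q ^ 3 / 5 ≤ Real.sin q := by linarith [hslo, hq4]
    have hlo0 : 0 ≤ q - q ^ 3 / 5 := by linarith [hq3, hq0]
    have hub : Real.sin q ≤ q - q ^ 3 * (77 / 500) := by linarith [hsub, hq4]
    have e2 : Real.sin q ^ 2 ≤ (q - q ^ 3 * (77 / 500)) ^ 2 := by
      exact pow_le_pow_left₀ hsnn hub 2
    have e2b : Real.sin q ^ 2 ≤ q ^ 2 - (77 / 250) * q ^ 4 + (5929 / 250000) * q ^ 6 := by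
      linarith [e2]
    have e4 : (q - q ^ 3 / 5) ^ 4 ≤ Real.sin q ^ 4 := pow_le_pow_left₀ hlo0 hlo 4
    have e4b : q ^ 4 - (4 / 5) * q ^ 6 ≤ (q - q ^ 3 / 5) ^ 4 := by
      have h10 : q ^ 10 ≤ q ^ 8 := pow_le_pow_of_le_one hq0 hq2 (by omega)
      linarith [h10, pow_nonneg hq0 12, pow_nonneg hq0 8]
    have s4lb : q ^ 4 - (4 / 5) * q ^ 6 ≤ Real.sin q ^ 4 := le_trans e4b e4
    have hcq : 1 - 8 * q ^ 2 + (1308 / 125) * q ^ 4 - (659 / 100) * q ^ 6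
        ≤ Real.cos (4 * q) := by
      rw [my_cos_four]
      linarith [e2b, s4lb, pow_nonneg hq0 6]
    have hcos4 : Real.cos (π * μ / 2) = Real.cos (4 * q) := by
      rw [hqdef]; ring_nf
    -- π power bounds
    have hπ4u : π ^ 4 ≤ 97.40918 := by
      linarith [mul_le_mul_of_nonneg_left hπ2u (sq_nonneg π), hπ2u]
    have hπ4l : (97.4 : ℝ) ≤ π ^ 4 := by
      linarith [hπ2l, sq_nonneg (π ^ 2 - 9.8696002)]
    have hπ6u : π ^ 6 ≤ 961.3915 := by
      linarith [mul_le_mul_of_nonneg_left hπ2u (pow_nonneg hπ0.le 4),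
        mul_le_mul_of_nonneg_right hπ4u (by norm_num : (0:ℝ) ≤ 9.8696088)]
    -- rationalized cos lower bound
    have hC : 1 - 1.2337011 * μ ^ 2 + 0.2488 * μ ^ 4 - 0.0242 * μ ^ 6
        ≤ Real.cos (π * μ / 2) := by
      rw [hcos4]
      refine le_trans ?_ hcq
      rw [hqdef]
      have t1 : π ^ 2 * μ ^ 2 ≤ 9.8696088 * μ ^ 2 :=
        mul_le_mul_of_nonneg_right hπ2u (sq_nonneg μ)
      have t2 : 97.4 * μ ^ 4 ≤ π ^ 4 * μ ^ 4 :=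
        mul_le_mul_of_nonneg_right hπ4l (by positivity)
      have t3 : π ^ 6 * μ ^ 6 ≤ 961.3915 * μ ^ 6 :=
        mul_le_mul_of_nonneg_right hπ6u (by positivity)
      nlinarith [t1, t2, t3, sq_nonneg μ, sq_nonneg (μ ^ 2), sq_nonneg (μ ^ 3)]
    have hz1 : μ ^ 2 ≤ 9 / 25 := by
      linarith [mul_le_mul hc hc h0 (by norm_num : (0:ℝ) ≤ 3 / 5), sq_nonneg μ,
        mul_self_nonneg μ, (by nlinarith : μ ^ 2 ≤ (3 / 5) * (3 / 5))]
    have h4 : μ ^ 4 ≤ (9 / 25) * μ ^ 2 := by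
      linarith [mul_le_mul_of_nonneg_right hz1 (sq_nonneg μ)]
    have h6 : μ ^ 6 ≤ (81 / 625) * μ ^ 2 := by
      linarith [mul_le_mul_of_nonneg_right h4 (sq_nonneg μ),
        mul_le_mul_of_nonneg_right hz1 (sq_nonneg μ)]
    have hC0 : 0 ≤ (1 - 1.2337011 * μ ^ 2 + 0.2488 * μ ^ 4 - 0.0242 * μ ^ 6) := by
      linarith [hz1, h6, sq_nonneg μ, sq_nonneg (μ ^ 2)]
    have hC1 : (1 - 1.2337011 * μ ^ 2 + 0.2488 * μ ^ 4 - 0.0242 * μ ^ 6) ≤ 1 := by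
      linarith [h4, sq_nonneg μ, sq_nonneg (μ ^ 3)]
    have hg : (0:ℝ) ≤ 0.1242132601477 - 0.2773893217477 * μ ^ 2 + 0.137545111 * μ ^ 4
        - 0.0207734494 * μ ^ 6 := by
      linarith [h6, hz1, sq_nonneg (μ ^ 2), sq_nonneg μ]
    have hR : 0 ≤ 3.141593 * (1 - μ ^ 2) * ((1 - 1.2337011 * μ ^ 2 + 0.2488 * μ ^ 4 - 0.0242 * μ ^ 6) - 1) + 4 * μ ^ 2 * (1 - 1.2337011 * μ ^ 2 + 0.2488 * μ ^ 4 - 0.0242 * μ ^ 6) := by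
      linarith [mul_nonneg (sq_nonneg μ) hg]
    have step1 : (1 - μ ^ 2) * π ≤ (1 - 1.2337011 * μ ^ 2 + 0.2488 * μ ^ 4 - 0.0242 * μ ^ 6) * ((1 - μ ^ 2) * π + 4 * μ ^ 2) := by
      linarith [hR, mul_nonneg (mul_nonneg hμ2 (sub_nonneg.mpr hC1))
        (sub_nonneg.mpr hπu.le)]
    calc (1 - μ ^ 2) * π ≤ (1 - 1.2337011 * μ ^ 2 + 0.2488 * μ ^ 4 - 0.0242 * μ ^ 6) * ((1 - μ ^ 2) * π + 4 * μ ^ 2) := step1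
      _ ≤ Real.cos (π * μ / 2) * ((1 - μ ^ 2) * π + 4 * μ ^ 2) :=
        mul_le_mul_of_nonneg_right hC hX
  · -- region 2 : μ ≥ 3/5
    obtain ⟨t, htdef⟩ : ∃ t : ℝ, t = 1 - μ := ⟨_, rfl⟩
    have ht0 : 0 ≤ t := by rw [htdef]; linarith
    have ht1 : t ≤ 2 / 5 := by rw [htdef]; linarith
    obtain ⟨x, hxdef⟩ : ∃ x : ℝ, x = π * t / 4 := ⟨_, rfl⟩
    have hx0 : 0 ≤ x := by rw [hxdef]; positivity
    have hx1 : x ≤ 0.3142 := by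
      rw [hxdef]
      linarith [mul_le_mul_of_nonneg_right hπu.le ht0]
    have hx2 : x ≤ 1 := by linarith
    have hslo := my_sin_lb hx0 hx2
    have hclo := my_cos_lb hx0 hx2
    have hsnn : 0 ≤ Real.sin x := Real.sin_nonneg_of_nonneg_of_le_pi hx0 (by linarith)
    have hx4 : x ^ 4 ≤ 0.3142 * x ^ 3 := by
      linarith [mul_le_mul_of_nonneg_left hx1 (pow_nonneg hx0 3)]
    have hx3 : x ^ 3 ≤ x := by
      have := pow_le_pow_of_le_one hx0 hx2 (show 1 ≤ 3 by omega)
      simpa using this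
    have hlo : x - x ^ 3 / 5 ≤ Real.sin x := by
      nlinarith [hslo, hx4, pow_nonneg hx0 3]
    have hx42 : x ^ 4 ≤ x ^ 2 := pow_le_pow_of_le_one hx0 hx2 (by omega)
    have hxx : x ^ 2 ≤ 0.3142 * 0.3142 := by
      nlinarith [mul_le_mul hx1 hx1 hx0 (by norm_num : (0:ℝ) ≤ 0.3142)]
    have hclo0 : 0 ≤ 1 - x ^ 2 / 2 - x ^ 4 * (5 / 96) := by
      linarith [hx42, hxx]
    have hcoseq : Real.cos (π * μ / 2) = Real.sin (π * t / 2) := by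
      rw [show π * μ / 2 = π / 2 - π * t / 2 by rw [htdef]; ring, Real.cos_pi_div_two_sub]
    have hsin2 : Real.sin (π * t / 2) = 2 * Real.sin x * Real.cos x := by
      rw [show π * t / 2 = 2 * (π * t / 4) by ring, Real.sin_two_mul, ← hxdef]
    have hprod : (x - x ^ 3 / 5) * (1 - x ^ 2 / 2 - x ^ 4 * (5 / 96))
        ≤ Real.sin x * Real.cos x :=
      mul_le_mul hlo hclo hclo0 hsnn
    have hc1 : 2 * x - (7 / 5) * x ^ 3 ≤ Real.cos (π * μ / 2) := by
      rw [hcoseq, hsin2]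
      linarith [hprod, pow_nonneg hx0 5, pow_nonneg hx0 7]
    have hπ3u : π ^ 3 ≤ 31.00629 := by
      nlinarith [mul_le_mul_of_nonneg_right hπ2u hπ0.le, hπu]
    have hclow : π * t / 2 - 0.6783 * t ^ 3 ≤ Real.cos (π * μ / 2) := by
      refine le_trans ?_ hc1
      rw [hxdef]
      have ht3 : (0:ℝ) ≤ t ^ 3 := by positivity
      linarith [mul_le_mul_of_nonneg_right hπ3u ht3]
    have step1 : (1 - μ ^ 2) * π
        ≤ (π * t / 2 - 0.6783 * t ^ 3) * ((1 - μ ^ 2) * π + 4 * μ ^ 2) := by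
      have hμt : μ = 1 - t := by rw [htdef]; ring
      rw [hμt]
      have hkey : 3.141593 * (3 - 2 * t) * t ^ 2 + 2.1312 * (t ^ 2 * (2 - t)) * t ^ 2
          + 2.7132 * (t * (1 - t) ^ 2) * t ^ 2 ≤ 4.9348001 * (2 - t) * t ^ 2 := by
        nlinarith [mul_nonneg (sq_nonneg (2 / 5 - t)) (sq_nonneg t),
          mul_nonneg (sub_nonneg.mpr ht1) (sq_nonneg t),
          mul_le_mul_of_nonneg_right ht1 (pow_nonneg ht0 4)]
      have hp1 : (0:ℝ) ≤ (3 - 2 * t) * t ^ 2 :=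
        mul_nonneg (by linarith) (sq_nonneg t)
      have hB1 : π * ((3 - 2 * t) * t ^ 2) ≤ 3.141593 * ((3 - 2 * t) * t ^ 2) :=
        mul_le_mul_of_nonneg_right hπu.le hp1
      have hp2 : (0:ℝ) ≤ (2 - t) * t ^ 2 :=
        mul_nonneg (by linarith) (sq_nonneg t)
      have hB2 : 9.8696002 * ((2 - t) * t ^ 2) ≤ π ^ 2 * ((2 - t) * t ^ 2) :=
        mul_le_mul_of_nonneg_right hπ2l hp2
      have hp3 : (0:ℝ) ≤ t ^ 2 * (2 - t) * t ^ 2 :=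
        mul_nonneg (mul_nonneg (sq_nonneg t) (by linarith)) (sq_nonneg t)
      have hπc : 0.6783 * π ≤ 2.1312 := by linarith
      have hB3 : 0.6783 * π * (t ^ 2 * (2 - t) * t ^ 2)
          ≤ 2.1312 * (t ^ 2 * (2 - t) * t ^ 2) :=
        mul_le_mul_of_nonneg_right hπc hp3
      linarith [hkey, hB1, hB2, hB3]
    calc (1 - μ ^ 2) * π
        ≤ (π * t / 2 - 0.6783 * t ^ 3) * ((1 - μ ^ 2) * π + 4 * μ ^ 2) := step1
      _ ≤ Real.cos (π * μ / 2) * ((1 - μ ^ 2) * π + 4 * μ ^ 2) :=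
        mul_le_mul_of_nonneg_right hclow hX

/-- Inequality (B) for μ ∈ [0,1]: (1-μ²)π ≤ 4 cos(πμ/2) -/
lemma lemB {μ : ℝ} (h0 : 0 ≤ μ) (h1 : μ ≤ 1) :
    (1 - μ ^ 2) * π ≤ 4 * Real.cos (π * μ / 2) := by
  have hπu : π < 3.141593 := Real.pi_lt_d6
  have hπ0 : 0 < π := Real.pi_pos
  have hμ2 : 0 ≤ 1 - μ ^ 2 := by nlinarith
  have hA := lemA_s16 h0 h1
  have hc0 : 0 ≤ Real.cos (π * μ / 2) := by
    apply Real.cos_nonneg_of_neg_pi_div_two_le_of_le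
    · nlinarith
    · nlinarith [mul_le_mul_of_nonneg_left h1 hπ0.le]
  have hle : (1 - μ ^ 2) * π + 4 * μ ^ 2 ≤ 4 := by
    nlinarith [mul_nonneg (show (0:ℝ) ≤ 4 - π by nlinarith) hμ2]
  calc (1 - μ ^ 2) * π ≤ Real.cos (π * μ / 2) * ((1 - μ ^ 2) * π + 4 * μ ^ 2) := hA
    _ ≤ Real.cos (π * μ / 2) * 4 := mul_le_mul_of_nonneg_left hle hc0
    _ = 4 * Real.cos (π * μ / 2) := by ring

/-- (A) extended to μ² ≤ 1 -/
lemma lemA' {μ : ℝ} (h : μ ^ 2 ≤ 1) :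
    (1 - μ ^ 2) * π ≤ Real.cos (π * μ / 2) * ((1 - μ ^ 2) * π + 4 * μ ^ 2) := by
  rcases le_total 0 μ with hs | hs
  · exact lemA_s16 hs (by nlinarith)
  · have h1 : -μ ≤ 1 := by nlinarith
    have h2 := lemA_s16 (by linarith : (0:ℝ) ≤ -μ) h1
    rw [show π * -μ / 2 = -(π * μ / 2) by ring, Real.cos_neg] at h2
    have e : (-μ) ^ 2 = μ ^ 2 := by ring
    rw [e] at h2
    exact h2

lemma lemB' {μ : ℝ} (h : μ ^ 2 ≤ 1) :
    (1 - μ ^ 2) * π ≤ 4 * Real.cos (π * μ / 2) := by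
  rcases le_total 0 μ with hs | hs
  · exact lemB hs (by nlinarith)
  · have h1 : -μ ≤ 1 := by nlinarith
    have h2 := lemB (by linarith : (0:ℝ) ≤ -μ) h1
    rw [show π * -μ / 2 = -(π * μ / 2) by ring, Real.cos_neg] at h2
    have e : (-μ) ^ 2 = μ ^ 2 := by ring
    rw [e] at h2
    exact h2

/-- coefficient inequality for the series argument -/
lemma coeff_ineq {μ : ℝ} (h : μ ^ 2 ≤ 1) (n : ℕ) :
    π * (1 - (μ ^ 2) ^ (n + 1))
      ≤ Real.cos (π * μ / 2) * (π * (1 - μ ^ 2) + 4 * ((n : ℝ) + 1) * μ ^ 2) := by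
  induction n with
  | zero =>
    have hA := lemA' h
    norm_num
    nlinarith [hA]
  | succ k ih =>
    have hB := lemB' h
    have hpow : (μ ^ 2) ^ (k + 1) ≤ μ ^ 2 := by
      calc (μ ^ 2) ^ (k + 1) ≤ (μ ^ 2) ^ 1 :=
        pow_le_pow_of_le_one (sq_nonneg μ) h (by omega)
      _ = μ ^ 2 := pow_one _
    have hstep : π * ((μ ^ 2) ^ (k + 1) - (μ ^ 2) ^ (k + 2))
        ≤ 4 * μ ^ 2 * Real.cos (π * μ / 2) := by
      have e : (μ ^ 2) ^ (k + 2) = (μ ^ 2) ^ (k + 1) * μ ^ 2 := by ring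
      rw [e]
      have h1 : (μ ^ 2) ^ (k + 1) * (1 - μ ^ 2) ≤ μ ^ 2 * (1 - μ ^ 2) :=
        mul_le_mul_of_nonneg_right hpow (by linarith)
      nlinarith [mul_le_mul_of_nonneg_left h1 Real.pi_pos.le,
        mul_le_mul_of_nonneg_left hB (sq_nonneg μ)]
    push_cast
    push_cast at ih
    nlinarith [ih, hstep]

/-- The key series inequality. -/
lemma key_ineq {μ : ℝ} (h : μ ^ 2 ≤ 1) (d : ℝ) :
    Real.cosh d ≤ Real.cosh (μ * d)
      + (1 - μ ^ 2) * Real.cos (π * μ / 2) * (Real.cosh d - 1)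
      + 2 * μ ^ 2 * Real.cos (π * μ / 2) / π * (d * Real.sinh d) := by
  set c : ℝ := Real.cos (π * μ / 2) with hcdef
  have hπ0 : 0 < π := Real.pi_pos
  have h1 := Real.hasSum_cosh d
  have h2 := Real.hasSum_cosh (μ * d)
  have h3 := (Real.hasSum_sinh d).mul_left d
  have h1' : HasSum (fun n : ℕ => d ^ (2 * (n + 1)) / ((2 * (n + 1)).factorial : ℝ))
      (Real.cosh d - ∑ i ∈ Finset.range 1, d ^ (2 * i) / ((2 * i).factorial : ℝ)) :=
    (hasSum_nat_add_iff' 1).mpr h1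
  have h2' : HasSum (fun n : ℕ => (μ * d) ^ (2 * (n + 1)) / ((2 * (n + 1)).factorial : ℝ))
      (Real.cosh (μ * d) - ∑ i ∈ Finset.range 1, (μ * d) ^ (2 * i) / ((2 * i).factorial : ℝ)) :=
    (hasSum_nat_add_iff' 1).mpr h2
  have hsum1 : (∑ i ∈ Finset.range 1, d ^ (2 * i) / ((2 * i).factorial : ℝ)) = 1 := by simp
  have hsum2 : (∑ i ∈ Finset.range 1, (μ * d) ^ (2 * i) / ((2 * i).factorial : ℝ)) = 1 := by
    simp
  rw [hsum1] at h1'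
  rw [hsum2] at h2'
  have H := ((h1'.mul_left ((1 - μ ^ 2) * c)).add (h3.mul_left (2 * μ ^ 2 * c / π))).sub
    (h1'.sub h2')
  have hterm : ∀ n : ℕ,
      (0:ℝ) ≤ (1 - μ ^ 2) * c * (d ^ (2 * (n + 1)) / ((2 * (n + 1)).factorial : ℝ))
        + 2 * μ ^ 2 * c / π * (d * (d ^ (2 * n + 1) / ((2 * n + 1).factorial : ℝ)))
        - (d ^ (2 * (n + 1)) / ((2 * (n + 1)).factorial : ℝ)
          - (μ * d) ^ (2 * (n + 1)) / ((2 * (n + 1)).factorial : ℝ)) := by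
    intro n
    have e1 : d ^ (2 * (n + 1)) = (d ^ 2) ^ (n + 1) := by rw [pow_mul]
    have e2 : (μ * d) ^ (2 * (n + 1)) = (μ ^ 2) ^ (n + 1) * (d ^ 2) ^ (n + 1) := by
      rw [pow_mul, mul_pow, mul_pow]
    have e3 : d * d ^ (2 * n + 1) = (d ^ 2) ^ (n + 1) := by
      rw [show (d ^ 2) ^ (n + 1) = d ^ (2 * (n + 1)) from (pow_mul d 2 (n + 1)).symm,
        show 2 * (n + 1) = (2 * n + 1) + 1 by ring, pow_succ]
      ring
    have hfac : ((2 * (n + 1)).factorial : ℝ)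
        = (2 * (n : ℝ) + 2) * ((2 * n + 1).factorial : ℝ) := by
      rw [show 2 * (n + 1) = (2 * n + 1) + 1 by ring, Nat.factorial_succ]
      push_cast
      ring
    have hD : (0:ℝ) ≤ (d ^ 2) ^ (n + 1) := by positivity
    have hfacpos : (0:ℝ) < ((2 * n + 1).factorial : ℝ) := by
      exact_mod_cast Nat.factorial_pos _
    have hfacpos2 : (0:ℝ) < ((2 * (n + 1)).factorial : ℝ) := by
      exact_mod_cast Nat.factorial_pos _
    have hbr0 : (0:ℝ) ≤ c * (π * (1 - μ ^ 2) + 4 * ((n : ℝ) + 1) * μ ^ 2)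
        - π * (1 - (μ ^ 2) ^ (n + 1)) := sub_nonneg.mpr (coeff_ineq h n)
    have hbr : (0:ℝ) ≤ (1 - μ ^ 2) * c + (2 * (n : ℝ) + 2) * (2 * μ ^ 2 * c / π)
        - 1 + (μ ^ 2) ^ (n + 1) := by
      have hdiv := div_nonneg hbr0 hπ0.le
      rw [show (c * (π * (1 - μ ^ 2) + 4 * ((n : ℝ) + 1) * μ ^ 2)
          - π * (1 - (μ ^ 2) ^ (n + 1))) / π
          = (1 - μ ^ 2) * c + (2 * (n : ℝ) + 2) * (2 * μ ^ 2 * c / π)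
            - 1 + (μ ^ 2) ^ (n + 1) from by field_simp; ring] at hdiv
      exact hdiv
    have egoal : (1 - μ ^ 2) * c * (d ^ (2 * (n + 1)) / ((2 * (n + 1)).factorial : ℝ))
        + 2 * μ ^ 2 * c / π * (d * (d ^ (2 * n + 1) / ((2 * n + 1).factorial : ℝ)))
        - (d ^ (2 * (n + 1)) / ((2 * (n + 1)).factorial : ℝ)
          - (μ * d) ^ (2 * (n + 1)) / ((2 * (n + 1)).factorial : ℝ))
        = ((d ^ 2) ^ (n + 1) / ((2 * (n + 1)).factorial : ℝ))
          * ((1 - μ ^ 2) * c + (2 * (n : ℝ) + 2) * (2 * μ ^ 2 * c / π)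
            - 1 + (μ ^ 2) ^ (n + 1)) := by
      rw [e1, e2, hfac,
        show d * (d ^ (2 * n + 1) / ((2 * n + 1).factorial : ℝ))
          = (d ^ 2) ^ (n + 1) / ((2 * n + 1).factorial : ℝ) from by rw [← e3]; ring]
      have hne : ((2 * n + 1).factorial : ℝ) ≠ 0 := ne_of_gt hfacpos
      have hne2 : (2 * (n : ℝ) + 2) ≠ 0 := by positivity
      field_simp
      ring
    rw [egoal]
    exact mul_nonneg (div_nonneg hD hfacpos2.le) hbr
  have hle := hasSum_le hterm hasSum_zero H
  linarith [hle]

theorem new_reverse_heinz (a b l : ℝ) (ha : 0 < a) (hb : 0 < b)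
    (hl : l ∈ Set.Icc (0:ℝ) 1) :
    (a ^ (1 - l) * b ^ l + a ^ l * b ^ (1 - l)) / 2 ≥
      (a + b) / 2 -
        2 * l * (1 - l) * Real.sin (Real.pi * l) *
          (Real.sqrt a - Real.sqrt b) ^ 2 -
        (2 * l - 1) ^ 2 * (Real.sin (Real.pi * l) / (2 * Real.pi)) * (b - a) *
          Real.log (b / a) := by
  obtain ⟨hl0, hl1⟩ := hl
  set μ : ℝ := 2 * l - 1 with hμdef
  set m : ℝ := (Real.log a + Real.log b) / 2 with hmdef
  set d : ℝ := (Real.log b - Real.log a) / 2 with hddef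
  have hμ2 : μ ^ 2 ≤ 1 := by rw [hμdef]; nlinarith
  have hπ0 : 0 < π := Real.pi_pos
  have ema : Real.exp m * Real.exp d = b := by
    rw [← Real.exp_add, show m + d = Real.log b by rw [hmdef, hddef]; ring,
      Real.exp_log hb]
  have emb : Real.exp m * Real.exp (-d) = a := by
    rw [← Real.exp_add, show m + -d = Real.log a by rw [hmdef, hddef]; ring,
      Real.exp_log ha]
  -- E5 : sin (π l) = cos (π μ / 2)
  have E5 : Real.sin (π * l) = Real.cos (π * μ / 2) := by
    rw [show π * l = π / 2 - -(π * μ / 2) by rw [hμdef]; ring, Real.sin_pi_div_two_sub,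
      Real.cos_neg]
  -- E1
  have E1 : (a ^ (1 - l) * b ^ l + a ^ l * b ^ (1 - l)) / 2
      = Real.exp m * Real.cosh (μ * d) := by
    rw [Real.cosh_eq, Real.rpow_def_of_pos ha, Real.rpow_def_of_pos hb,
      Real.rpow_def_of_pos ha, Real.rpow_def_of_pos hb, ← Real.exp_add, ← Real.exp_add]
    rw [show Real.exp m * ((Real.exp (μ * d) + Real.exp (-(μ * d))) / 2)
        = (Real.exp (m + μ * d) + Real.exp (m + -(μ * d))) / 2 from by
      rw [Real.exp_add, Real.exp_add]; ring]
    rw [show Real.log a * (1 - l) + Real.log b * l = m + μ * d from by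
        rw [hmdef, hddef, hμdef]; ring,
      show Real.log a * l + Real.log b * (1 - l) = m + -(μ * d) from by
        rw [hmdef, hddef, hμdef]; ring]
  -- E2
  have E2 : (a + b) / 2 = Real.exp m * Real.cosh d := by
    rw [Real.cosh_eq]
    rw [show Real.exp m * ((Real.exp d + Real.exp (-d)) / 2)
        = (Real.exp m * Real.exp d + Real.exp m * Real.exp (-d)) / 2 from by ring]
    rw [ema, emb]
    ring
  -- E3
  have hsa : Real.sqrt a = Real.exp (Real.log a / 2) := by
    rw [Real.exp_half, Real.exp_log ha]
  have hsb : Real.sqrt b = Real.exp (Real.log b / 2) := by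
    rw [Real.exp_half, Real.exp_log hb]
  have ea : Real.exp (Real.log a / 2) ^ 2 = a := by
    rw [pow_two, ← Real.exp_add, show Real.log a / 2 + Real.log a / 2 = Real.log a by ring,
      Real.exp_log ha]
  have eb : Real.exp (Real.log b / 2) ^ 2 = b := by
    rw [pow_two, ← Real.exp_add, show Real.log b / 2 + Real.log b / 2 = Real.log b by ring,
      Real.exp_log hb]
  have eab : Real.exp (Real.log a / 2) * Real.exp (Real.log b / 2) = Real.exp m := by
    rw [← Real.exp_add, show Real.log a / 2 + Real.log b / 2 = m by rw [hmdef]; ring]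
  have E3 : (Real.sqrt a - Real.sqrt b) ^ 2 = Real.exp m * (2 * (Real.cosh d - 1)) := by
    rw [hsa, hsb, Real.cosh_eq]
    linear_combination ea + eb - 2 * eab - ema - emb
  -- E4
  have E4a : Real.log (b / a) = 2 * d := by
    rw [Real.log_div hb.ne' ha.ne', hddef]; ring
  have E4b : b - a = Real.exp m * (2 * Real.sinh d) := by
    rw [Real.sinh_eq]
    linear_combination emb - ema
  -- assemble
  have key := key_ineq hμ2 d
  rw [ge_iff_le, E5, E2, E3, E4a, E4b, E1]
  have hgoal := mul_le_mul_of_nonneg_left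
    (show Real.cosh d - (1 - μ ^ 2) * Real.cos (π * μ / 2) * (Real.cosh d - 1)
        - 2 * μ ^ 2 * Real.cos (π * μ / 2) / π * (d * Real.sinh d)
        ≤ Real.cosh (μ * d) from by linarith [key]) (Real.exp_nonneg m)
  refine le_trans (le_of_eq ?_) hgoal
  rw [hμdef]
  field_simp
  ring
end

section
/- For λ ∈ (0,1) and p ∈ [0,1], ∫₀^(1/2) (t/(1-t))^λ dt ≥ ((1-λ)/2)·M_λ(p) + (λ/2)·m_λ(p), where M_λ(p) = (1/2)·((p(1-λ)/(2-p(1-λ)))^λ + (1-p)·((1-λ)/(1+λ))^λ) and m_λ(p) = p·((2-2λ+pλ)/(2+2λ-pλ))^λ + (1-p)·((2-λ+pλ)/(2+λ-pλ))^λ. -/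
open Set

lemma hasDerivAt_upow (k : ℝ) {t : ℝ} (ht : t ∈ Set.Ioo (0:ℝ) 1) :
    HasDerivAt (fun t => (t/(1-t)) ^ k)
      (((1-t)^2)⁻¹ * k * (t/(1-t)) ^ (k-1)) t := by
  obtain ⟨h0, h1⟩ := ht
  have h1' : (1:ℝ) - t ≠ 0 := by linarith
  have hu : HasDerivAt (fun t : ℝ => t/(1-t)) (((1-t)^2)⁻¹) t := by
    have := (hasDerivAt_id t).div ((hasDerivAt_id t).const_sub 1) h1'
    refine this.congr_deriv ?_
    simp only [id]; rw [div_eq_iff (pow_ne_zero 2 h1'), inv_mul_cancel₀ (pow_ne_zero 2 h1')]; ring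
  have hune : t / (1 - t) ≠ 0 := by positivity
  exact hu.rpow_const (Or.inl hune)

/-- alternative form of the derivative of Ψ -/
lemma hasDerivAt_psi {l : ℝ} (hl : l ∈ Set.Ioo (0:ℝ) 1) {t : ℝ} (ht : t ∈ Set.Ioo (0:ℝ) 1) :
    HasDerivAt (fun t => (t/(1-t)) ^ l)
      (l * ((t/(1-t))^(l-1) + 2*(t/(1-t))^l + (t/(1-t))^(l+1))) t := by
  obtain ⟨h0, h1⟩ := ht
  have h1' : (0:ℝ) < 1 - t := by linarith
  have hu : (0:ℝ) < t/(1-t) := by positivity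
  convert hasDerivAt_upow l ⟨h0, h1⟩ using 1
  have e1 : (t/(1-t))^l = (t/(1-t))^(l-1) * (t/(1-t)) := by
    rw [show l = (l-1)+1 by ring, Real.rpow_add_one hu.ne']; norm_num
  have e2 : (t/(1-t))^(l+1) = (t/(1-t))^(l-1) * (t/(1-t)) * (t/(1-t)) := by
    rw [Real.rpow_add_one hu.ne', e1]
  rw [e1, e2]
  have hinv : (1-t)⁻¹ = 1 + t/(1-t) := by field_simp; ring
  have : ((1-t)^2)⁻¹ = (1 + t/(1-t))^2 := by
    rw [← hinv]; rw [inv_pow]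
  rw [this]
  ring

/-- derivative of φ -/
lemma hasDerivAt_phi {l : ℝ} (hl : l ∈ Set.Ioo (0:ℝ) 1) {t : ℝ} (ht : t ∈ Set.Ioo (0:ℝ) 1) :
    HasDerivAt (fun t => l * ((t/(1-t))^(l-1) + 2*(t/(1-t))^l + (t/(1-t))^(l+1)))
      (l * ((1-t)^2)⁻¹ * (t/(1-t))^(l-2) *
        ((l+1)*(t/(1-t))^2 + 2*l*(t/(1-t)) + (l-1))) t := by
  obtain ⟨h0, h1⟩ := ht
  have h1' : (0:ℝ) < 1 - t := by linarith
  have hu : (0:ℝ) < t/(1-t) := by positivity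
  have d1 := hasDerivAt_upow (l-1) ⟨h0, h1⟩
  have d2 := hasDerivAt_upow l ⟨h0, h1⟩
  have d3 := hasDerivAt_upow (l+1) ⟨h0, h1⟩
  have := (((d1.add (d2.const_mul (2:ℝ))).add d3).const_mul l)
  refine this.congr_deriv ?_
  have e1 : (t/(1-t))^(l-1) = (t/(1-t))^(l-2) * (t/(1-t)) := by
    rw [show l-1 = (l-2)+1 by ring, Real.rpow_add_one hu.ne']
  have e2 : (t/(1-t))^(l-1-1) = (t/(1-t))^(l-2) := by congr 1; ring
  have e3 : (t/(1-t))^(l+1-1) = (t/(1-t))^(l-2) * (t/(1-t)) * (t/(1-t)) := by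
    rw [show l+1-1 = ((l-2)+1)+1 by ring, Real.rpow_add_one hu.ne', Real.rpow_add_one hu.ne']
  rw [e2, e3, e1]
  ring

section
variable {l : ℝ}

lemma continuousOn_psi (hl : 0 < l) :
    ContinuousOn (fun t : ℝ => (t/(1-t))^l) (Set.Iio (1:ℝ)) := by
  intro t ht
  have h1' : (1:ℝ) - t ≠ 0 := by simp only [Set.mem_Iio] at ht; intro h; linarith
  exact ((Real.continuousAt_rpow_const _ l (Or.inr hl.le)).comp
    (continuousAt_id.div (continuousAt_const.sub continuousAt_id) h1')).continuousWithinAt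

lemma q_factor (l u : ℝ) : (l+1)*u^2 + 2*l*u + (l-1) = (1+u)*((l+1)*u-(1-l)) := by ring

lemma concave_psi (hl : l ∈ Set.Ioo (0:ℝ) 1) :
    ConcaveOn ℝ (Icc (0:ℝ) ((1-l)/2)) (fun t : ℝ => (t/(1-t))^l) := by
  obtain ⟨hl0, hl1⟩ := hl
  have hc1 : (1-l)/2 < 1 := by linarith
  have hsub : Ioo (0:ℝ) ((1-l)/2) ⊆ Ioo (0:ℝ) 1 := Ioo_subset_Ioo le_rfl hc1.le
  refine AntitoneOn.concaveOn_of_deriv (convex_Icc _ _)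
    ((continuousOn_psi hl0).mono (fun t ht => lt_of_le_of_lt ht.2 hc1))
    ?_ ?_
  · rw [interior_Icc]
    exact fun t ht => (hasDerivAt_psi ⟨hl0, hl1⟩ (hsub ht)).differentiableAt.differentiableWithinAt
  · rw [interior_Icc]
    have key : ∀ t ∈ Ioo (0:ℝ) ((1-l)/2),
        deriv (fun t : ℝ => (t/(1-t))^l) t
          = l * ((t/(1-t))^(l-1) + 2*(t/(1-t))^l + (t/(1-t))^(l+1)) :=
      fun t ht => (hasDerivAt_psi ⟨hl0, hl1⟩ (hsub ht)).deriv
    have anti : AntitoneOn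
        (fun t : ℝ => l * ((t/(1-t))^(l-1) + 2*(t/(1-t))^l + (t/(1-t))^(l+1)))
        (Ioo (0:ℝ) ((1-l)/2)) := by
      refine antitoneOn_of_deriv_nonpos (convex_Ioo _ _)
        (fun t ht => (hasDerivAt_phi ⟨hl0, hl1⟩ (hsub ht)).differentiableAt.continuousAt.continuousWithinAt)
        (fun t ht => by
          rw [interior_Ioo] at ht
          exact (hasDerivAt_phi ⟨hl0, hl1⟩ (hsub ht)).differentiableAt.differentiableWithinAt)
        (fun t ht => ?_)
      rw [interior_Ioo] at ht
      rw [(hasDerivAt_phi ⟨hl0, hl1⟩ (hsub ht)).deriv]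
      obtain ⟨h0, hc⟩ := ht
      have h1t : (0:ℝ) < 1 - t := by linarith
      have hu : (0:ℝ) < t/(1-t) := by positivity
      have hq : (l+1)*(t/(1-t))^2 + 2*l*(t/(1-t)) + (l-1) ≤ 0 := by
        rw [q_factor]
        apply mul_nonpos_of_nonneg_of_nonpos (by positivity)
        have : (l+1)*(t/(1-t)) ≤ 1-l := by
          rw [mul_div_assoc'] at *
          rw [div_le_iff₀ h1t]
          nlinarith
        linarith
      exact mul_nonpos_of_nonneg_of_nonpos (by positivity) hq
    exact fun x hx y hy hxy => by rw [key x hx, key y hy]; exact anti hx hy hxy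

lemma convex_psi (hl : l ∈ Set.Ioo (0:ℝ) 1) :
    ConvexOn ℝ (Icc ((1-l)/2) (1/2:ℝ)) (fun t : ℝ => (t/(1-t))^l) := by
  obtain ⟨hl0, hl1⟩ := hl
  have hsub : Ioo ((1-l)/2) (1/2:ℝ) ⊆ Ioo (0:ℝ) 1 :=
    Ioo_subset_Ioo (by linarith) (by linarith)
  refine MonotoneOn.convexOn_of_deriv (convex_Icc _ _)
    ((continuousOn_psi hl0).mono (fun t ht => lt_of_le_of_lt ht.2 (by norm_num)))
    ?_ ?_
  · rw [interior_Icc]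
    exact fun t ht => (hasDerivAt_psi ⟨hl0, hl1⟩ (hsub ht)).differentiableAt.differentiableWithinAt
  · rw [interior_Icc]
    have key : ∀ t ∈ Ioo ((1-l)/2) (1/2:ℝ),
        deriv (fun t : ℝ => (t/(1-t))^l) t
          = l * ((t/(1-t))^(l-1) + 2*(t/(1-t))^l + (t/(1-t))^(l+1)) :=
      fun t ht => (hasDerivAt_psi ⟨hl0, hl1⟩ (hsub ht)).deriv
    have mono : MonotoneOn
        (fun t : ℝ => l * ((t/(1-t))^(l-1) + 2*(t/(1-t))^l + (t/(1-t))^(l+1)))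
        (Ioo ((1-l)/2) (1/2:ℝ)) := by
      refine monotoneOn_of_deriv_nonneg (convex_Ioo _ _)
        (fun t ht => (hasDerivAt_phi ⟨hl0, hl1⟩ (hsub ht)).differentiableAt.continuousAt.continuousWithinAt)
        (fun t ht => by
          rw [interior_Ioo] at ht
          exact (hasDerivAt_phi ⟨hl0, hl1⟩ (hsub ht)).differentiableAt.differentiableWithinAt)
        (fun t ht => ?_)
      rw [interior_Ioo] at ht
      rw [(hasDerivAt_phi ⟨hl0, hl1⟩ (hsub ht)).deriv]
      obtain ⟨hc, hhalf⟩ := ht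
      have h0 : (0:ℝ) < t := by linarith
      have h1t : (0:ℝ) < 1 - t := by linarith
      have hu : (0:ℝ) < t/(1-t) := by positivity
      have hq : 0 ≤ (l+1)*(t/(1-t))^2 + 2*l*(t/(1-t)) + (l-1) := by
        rw [q_factor]
        apply mul_nonneg (by positivity)
        have : 1-l ≤ (l+1)*(t/(1-t)) := by
          rw [mul_div_assoc', le_div_iff₀ h1t]
          nlinarith
        linarith
      positivity
    exact fun x hx y hy hxy => by rw [key x hx, key y hy]; exact mono hx hy hxy
end

open MeasureTheory intervalIntegral

lemma linear_integral {a b : ℝ} (c C : ℝ) :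
    (∫ t in a..b, (c + C * (t - a))) = (b-a)*c + C*((b-a)^2/2) := by
  rw [intervalIntegral.integral_add intervalIntegrable_const
    ((by continuity : Continuous (fun t : ℝ => C * (t - a))).intervalIntegrable _ _),
    intervalIntegral.integral_const, intervalIntegral.integral_const_mul,
    intervalIntegral.integral_sub intervalIntegrable_id intervalIntegrable_const,
    integral_id, intervalIntegral.integral_const]
  simp only [smul_eq_mul]
  ring

lemma trapezoid_le {f : ℝ → ℝ} {a b : ℝ} (hab : a ≤ b)
    (hf : ConcaveOn ℝ (Icc a b) f) (hint : IntervalIntegrable f volume a b) :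
    (b-a) * ((f a + f b)/2) ≤ ∫ t in a..b, f t := by
  rcases hab.eq_or_lt with rfl | hlt
  · simp
  have hba : (0:ℝ) < b - a := by linarith
  have hle : ∀ t ∈ Icc a b, f a + (f b - f a)/(b-a) * (t - a) ≤ f t := by
    intro t ⟨hta, htb⟩
    have h := hf.2 (left_mem_Icc.2 hab) (right_mem_Icc.2 hab)
      (show (0:ℝ) ≤ (b-t)/(b-a) from div_nonneg (by linarith) hba.le)
      (show (0:ℝ) ≤ (t-a)/(b-a) from div_nonneg (by linarith) hba.le)
      (show (b-t)/(b-a) + (t-a)/(b-a) = 1 by field_simp; ring)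
    have harg : ((b-t)/(b-a)) • a + ((t-a)/(b-a)) • b = t := by
      simp only [smul_eq_mul]; field_simp; ring
    rw [harg] at h
    have hval : f a + (f b - f a)/(b-a) * (t - a)
        = ((b-t)/(b-a)) • f a + ((t-a)/(b-a)) • f b := by
      simp only [smul_eq_mul]; field_simp; ring
    rw [hval]; exact h
  calc (b-a) * ((f a + f b)/2)
      = ∫ t in a..b, (f a + (f b - f a)/(b-a) * (t - a)) := by
        rw [linear_integral]; field_simp; ring
    _ ≤ ∫ t in a..b, f t := by
        apply intervalIntegral.integral_mono_on hab _ hint hle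
        exact (by continuity : Continuous (fun t : ℝ => f a + (f b - f a)/(b-a) * (t - a))).intervalIntegrable _ _

lemma midpoint_le {f : ℝ → ℝ} {a b : ℝ} (hab : a ≤ b)
    (hf : ConvexOn ℝ (Icc a b) f) (hcont : ContinuousOn f (Icc a b)) :
    (b-a) * f ((a+b)/2) ≤ ∫ t in a..b, f t := by
  rcases hab.eq_or_lt with rfl | hlt
  · simp
  have hba : (0:ℝ) < b - a := by linarith
  have hvol : volume (Icc a b) = ENNReal.ofReal (b - a) := Real.volume_Icc
  have h := hf.map_set_average_le (μ := volume) (t := Icc a b) hcont isClosed_Icc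
    (by rw [hvol]; simp [hba.le]; linarith)
    (by rw [hvol]; exact ENNReal.ofReal_ne_top)
    (ae_restrict_mem measurableSet_Icc)
    (continuous_id.continuousOn.integrableOn_Icc)
    (by exact hcont.integrableOn_Icc)
  have hIcc : ∀ g : ℝ → ℝ, (∫ x in Icc a b, g x) = ∫ x in a..b, g x := by
    intro g
    rw [integral_Icc_eq_integral_Ioc, intervalIntegral.integral_of_le hab]
  rw [setAverage_eq, setAverage_eq, Real.volume_real_Icc_of_le hab,
    hIcc, hIcc, smul_eq_mul, smul_eq_mul] at h
  have hid : (∫ x in a..b, (id x : ℝ)) = (b^2 - a^2)/2 := by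
    simp [integral_id]
  rw [show (∫ x in a..b, x) = (b^2-a^2)/2 from by rw [integral_id]] at h
  have harg : (b-a)⁻¹ * ((b^2-a^2)/2) = (a+b)/2 := by field_simp; ring
  rw [harg] at h
  rw [mul_comm]
  calc f ((a+b)/2) * (b-a) ≤ ((b-a)⁻¹ * ∫ x in a..b, f x) * (b-a) := by
        apply mul_le_mul_of_nonneg_right h hba.le
    _ = ∫ x in a..b, f x := by field_simp


set_option maxHeartbeats 2000000 in
theorem psi_integral_lower_bound (l p : ℝ) (hl : l ∈ Set.Ioo (0:ℝ) 1)
    (hp : p ∈ Set.Icc (0:ℝ) 1) :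
    ((1 - l) / 2) *
        ((1 / 2) * ((p * (1 - l) / (2 - p * (1 - l))) ^ l +
          (1 - p) * ((1 - l) / (1 + l)) ^ l)) +
      (l / 2) *
        (p * ((2 - 2 * l + p * l) / (2 + 2 * l - p * l)) ^ l +
          (1 - p) * ((2 - l + p * l) / (2 + l - p * l)) ^ l) ≤
      ∫ t in (0:ℝ)..(1 / 2), (t / (1 - t)) ^ l := by
  obtain ⟨hl0, hl1⟩ := hl
  obtain ⟨hp0, hp1⟩ := hp
  set Ψ : ℝ → ℝ := fun t => (t/(1-t))^l with hΨ
  set c : ℝ := (1-l)/2 with hc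
  set a1 : ℝ := p*((1-l)/2) with ha1
  set m : ℝ := (1-l)/2 + p*(l/2) with hm
  have h0a1 : 0 ≤ a1 := by rw [ha1]; nlinarith
  have ha1c : a1 ≤ c := by rw [ha1, hc]; nlinarith
  have hcm : c ≤ m := by rw [hc, hm]; nlinarith
  have hm2 : m ≤ 1/2 := by rw [hm]; nlinarith
  have hc2 : c ≤ 1/2 := by linarith
  -- continuity / integrability
  have hcont : ContinuousOn Ψ (Icc (0:ℝ) (1/2)) :=
    (continuousOn_psi hl0).mono (fun t ht => lt_of_le_of_lt ht.2 (by norm_num))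
  have hint : ∀ x y : ℝ, x ∈ Icc (0:ℝ) (1/2) → y ∈ Icc (0:ℝ) (1/2) →
      IntervalIntegrable Ψ volume x y := by
    intro x y hx hy
    exact (hcont.mono (uIcc_subset_Icc hx hy)).intervalIntegrable
  have mem0 : (0:ℝ) ∈ Icc (0:ℝ) (1/2) := by constructor <;> norm_num
  have mema1 : a1 ∈ Icc (0:ℝ) (1/2) := ⟨h0a1, by linarith⟩
  have memc : c ∈ Icc (0:ℝ) (1/2) := ⟨by rw [hc]; linarith, hc2⟩
  have memm : m ∈ Icc (0:ℝ) (1/2) := ⟨by linarith, hm2⟩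
  have memh : (1/2:ℝ) ∈ Icc (0:ℝ) (1/2) := by constructor <;> norm_num
  -- split the integral
  have hsplit : (∫ t in (0:ℝ)..(1/2), Ψ t)
      = (∫ t in (0:ℝ)..a1, Ψ t) + (∫ t in a1..c, Ψ t)
        + (∫ t in c..m, Ψ t) + (∫ t in m..(1/2:ℝ), Ψ t) := by
    rw [integral_add_adjacent_intervals (hint _ _ mem0 mema1) (hint _ _ mema1 memc),
      integral_add_adjacent_intervals (hint _ _ mem0 memc) (hint _ _ memc memm),
      integral_add_adjacent_intervals (hint _ _ mem0 memm) (hint _ _ memm memh)]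
  -- the four sub-bounds
  have hconc := concave_psi (l := l) ⟨hl0, hl1⟩
  have hconv := convex_psi (l := l) ⟨hl0, hl1⟩
  have b1 : (a1 - 0) * ((Ψ 0 + Ψ a1)/2) ≤ ∫ t in (0:ℝ)..a1, Ψ t := by
    have := trapezoid_le (f := Ψ) (a := 0) (b := a1) h0a1
      (hconc.subset (Icc_subset_Icc le_rfl ha1c) (convex_Icc _ _))
      (hint _ _ mem0 mema1)
    simpa using this
  have b2 : (c - a1) * ((Ψ a1 + Ψ c)/2) ≤ ∫ t in a1..c, Ψ t :=
    trapezoid_le ha1c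
      (hconc.subset (Icc_subset_Icc h0a1 le_rfl) (convex_Icc _ _))
      (hint _ _ mema1 memc)
  have b3 : (m - c) * Ψ ((c + m)/2) ≤ ∫ t in c..m, Ψ t :=
    midpoint_le hcm
      (hconv.subset (Icc_subset_Icc le_rfl hm2) (convex_Icc _ _))
      (hcont.mono (Icc_subset_Icc memc.1 hm2))
  have b4 : (1/2 - m) * Ψ ((m + 1/2)/2) ≤ ∫ t in m..(1/2:ℝ), Ψ t :=
    midpoint_le hm2
      (hconv.subset (Icc_subset_Icc hcm le_rfl) (convex_Icc _ _))
      (hcont.mono (Icc_subset_Icc memm.1 le_rfl))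
  -- identify the ψ-values with the closed forms in the statement
  have hΨ0 : Ψ 0 = 0 := by
    simp only [hΨ]
    norm_num
    exact Real.zero_rpow hl0.ne'
  have hden1 : (0:ℝ) < 2 - p*(1-l) := by nlinarith
  have hA : (p * (1 - l) / (2 - p * (1 - l))) ^ l = Ψ a1 := by
    simp only [hΨ, ha1]
    congr 1
    rw [div_eq_div_iff hden1.ne' (by nlinarith : (0:ℝ) < 1 - p*((1-l)/2)).ne']
    ring
  have hB : ((1 - l) / (1 + l)) ^ l = Ψ c := by
    simp only [hΨ, hc]
    congr 1
    rw [div_eq_div_iff (by linarith : (0:ℝ) < 1 + l).ne' (by nlinarith : (0:ℝ) < 1 - (1-l)/2).ne']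
    ring
  have hC : ((2 - 2*l + p*l) / (2 + 2*l - p*l)) ^ l = Ψ ((c + m)/2) := by
    simp only [hΨ, hc, hm]
    congr 1
    rw [div_eq_div_iff (by nlinarith : (0:ℝ) < 2 + 2*l - p*l).ne'
      (by nlinarith : (0:ℝ) < 1 - ((1-l)/2 + ((1-l)/2 + p*(l/2)))/2).ne']
    ring
  have hD : ((2 - l + p*l) / (2 + l - p*l)) ^ l = Ψ ((m + 1/2)/2) := by
    simp only [hΨ, hm]
    congr 1
    rw [div_eq_div_iff (by nlinarith : (0:ℝ) < 2 + l - p*l).ne'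
      (by nlinarith : (0:ℝ) < 1 - (((1-l)/2 + p*(l/2)) + 1/2)/2).ne']
    ring
  rw [hA, hB, hC, hD, hsplit]
  have heq : c * ((1 / 2) * (Ψ a1 + (1 - p) * Ψ c)) +
      (l / 2) * (p * Ψ ((c + m)/2) + (1 - p) * Ψ ((m + 1/2)/2))
      = (a1 - 0) * ((Ψ 0 + Ψ a1)/2) + (c - a1) * ((Ψ a1 + Ψ c)/2)
        + (m - c) * Ψ ((c + m)/2) + (1/2 - m) * Ψ ((m + 1/2)/2) := by
    rw [hΨ0, ha1, hc, hm]; ring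
  linarith [b1, b2, b3, b4, heq.le]
end

section
/- For all real numbers a, b > 0 and λ ∈ (0,1): (1-λ)a + λb - a^(1-λ)b^λ = (sin(πλ)/π) ∫₀¹ t^(λ-1)(1-t)^(-λ) · ((1-t)a + tb - ((1-t)/a + t/b)^(-1)) dt. -/
open Real MeasureTheory intervalIntegral Set

lemma betaIntegrand_integrable {u v : ℝ} (hu : 0 < u) (hv : 0 < v) :
    IntervalIntegrable (fun t : ℝ => t ^ (u - 1) * (1 - t) ^ (v - 1)) volume 0 1 := by
  have h1 : IntervalIntegrable (fun t : ℝ => t ^ (u - 1) * (1 - t) ^ (v - 1)) volume 0 (1/2) := by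
    apply (intervalIntegral.intervalIntegrable_rpow' (by linarith : (-1:ℝ) < u - 1)).mul_continuousOn
    apply ContinuousOn.rpow_const (by fun_prop)
    intro x hx
    rw [Set.uIcc_of_le (by norm_num)] at hx
    left; intro h; simp at hx; linarith [hx.2, h]
  have h2 : IntervalIntegrable (fun t : ℝ => t ^ (u - 1) * (1 - t) ^ (v - 1)) volume (1/2) 1 := by
    have base : IntervalIntegrable (fun t : ℝ => t ^ (v - 1)) volume 0 (1/2) :=
      intervalIntegral.intervalIntegrable_rpow' (by linarith)
    have := (base.comp_sub_left 1).symm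
    norm_num at this
    apply IntervalIntegrable.continuousOn_mul this
    apply ContinuousOn.rpow_const (by fun_prop)
    intro x hx
    rw [Set.uIcc_of_le (by norm_num)] at hx
    left; intro h; simp at hx; linarith [hx.1]
  exact h1.trans h2

lemma real_betaIntegral {u v : ℝ} (hu : 0 < u) (hv : 0 < v) :
    ∫ t in (0:ℝ)..1, t ^ (u - 1) * (1 - t) ^ (v - 1) =
      Real.Gamma u * Real.Gamma v / Real.Gamma (u + v) := by
  have hc := Complex.Gamma_mul_Gamma_eq_betaIntegral (s := u) (t := v) (by simpa) (by simpa)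
  have hbeta : Complex.betaIntegral u v =
      ((∫ t in (0:ℝ)..1, t ^ (u - 1) * (1 - t) ^ (v - 1) : ℝ) : ℂ) := by
    rw [Complex.betaIntegral, ← intervalIntegral.integral_ofReal]
    apply intervalIntegral.integral_congr
    intro x hx
    rw [Set.uIcc_of_le (by norm_num)] at hx
    simp only []
    rw [Complex.ofReal_mul, Complex.ofReal_cpow hx.1,
      Complex.ofReal_cpow (by linarith [hx.2] : (0:ℝ) ≤ 1 - x)]
    push_cast; ring
  rw [hbeta, show ((u:ℂ) + v) = ((u + v : ℝ) : ℂ) by push_cast; ring,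
    Complex.Gamma_ofReal, Complex.Gamma_ofReal, Complex.Gamma_ofReal] at hc
  have hGne : Real.Gamma (u + v) ≠ 0 := Real.Gamma_pos_of_pos (by positivity) |>.ne'
  field_simp
  rw [mul_comm]
  exact_mod_cast hc.symm

lemma beta_reflect {l : ℝ} (hl : l ∈ Set.Ioo (0:ℝ) 1) :
    ∫ t in (0:ℝ)..1, t ^ (l - 1) * (1 - t) ^ (-l) = π / Real.sin (π * l) := by
  have h := real_betaIntegral hl.1 (by linarith [hl.2] : (0:ℝ) < 1 - l)
  rw [show (1 - l - 1) = -l by ring] at h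
  rw [h, show l + (1 - l) = 1 by ring, Real.Gamma_one, div_one,
    Real.Gamma_mul_Gamma_one_sub]

lemma aux_pointwise (c d t s D l : ℝ) (hc : 0 < c) (hd : 0 < d) (ht : 0 < t)
    (hs : 0 < s) (hD : 0 < D) :
    |c * d / D ^ 2| * ((d * t / D) ^ (l - 1) * (c * s / D) ^ (-l)) =
      c ^ (1 - l) * d ^ l * (t ^ (l - 1) * s ^ (-l) * D⁻¹) := by
  have h1 : Real.log (|c * d / D ^ 2| * ((d * t / D) ^ (l - 1) * (c * s / D) ^ (-l)))
      = Real.log (c ^ (1 - l) * d ^ l * (t ^ (l - 1) * s ^ (-l) * D⁻¹)) := by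
    rw [abs_of_pos (by positivity)]
    simp (disch := positivity) only [Real.log_mul, Real.log_div, Real.log_rpow,
      Real.log_pow, Real.log_inv]
    push_cast; ring
  have h2 := Real.exp_log (show (0:ℝ) <
    |c * d / D ^ 2| * ((d * t / D) ^ (l - 1) * (c * s / D) ^ (-l)) by
      rw [abs_of_pos (by positivity)]; positivity)
  have h3 := Real.exp_log (show (0:ℝ) <
    c ^ (1 - l) * d ^ l * (t ^ (l - 1) * s ^ (-l) * D⁻¹) by positivity)
  rw [← h2, ← h3, h1]


lemma harm_integral {l c d : ℝ} (hl : l ∈ Set.Ioo (0:ℝ) 1) (hc : 0 < c) (hd : 0 < d) :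
    ∫ t in (0:ℝ)..1, t ^ (l - 1) * (1 - t) ^ (-l) * ((1 - t) * c + t * d)⁻¹ =
      π / Real.sin (π * l) * (c ^ (l - 1) * d ^ (-l)) := by
  obtain ⟨hl0, hl1⟩ := hl
  set D : ℝ → ℝ := fun t => (1 - t) * c + t * d with hD
  have hDpos : ∀ t ∈ Set.Ioo (0:ℝ) 1, 0 < D t := by
    intro t ht
    have h1 := ht.1; have h2 := ht.2
    have e1 := mul_pos (sub_pos.2 h2) hc
    have e2 := mul_pos h1 hd
    simp only [hD]; linarith
  have hderiv : ∀ t ∈ Set.Ioo (0:ℝ) 1, HasDerivWithinAt (fun t => d * t / D t)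
      (c * d / (D t) ^ 2) (Set.Ioo (0:ℝ) 1) t := by
    intro t ht
    have hDt := hDpos t ht
    have h1 : HasDerivAt (fun t : ℝ => d * t) d t := by
      simpa using (hasDerivAt_id t).const_mul d
    have h2 : HasDerivAt D (-c + d) t := by
      have : HasDerivAt (fun t : ℝ => (1 - t) * c + t * d) ((0 - 1) * c + 1 * d) t :=
        (((hasDerivAt_const t (1:ℝ)).sub (hasDerivAt_id t)).mul_const c).add
          ((hasDerivAt_id t).mul_const d)
      simpa using this
    have h3 := (h1.div h2 hDt.ne').hasDerivWithinAt (s := Set.Ioo (0:ℝ) 1)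
    refine HasDerivWithinAt.congr_deriv h3 ?_
    rw [div_eq_div_iff (by positivity) (by positivity)]
    simp only [hD]; ring
  have hinj : Set.InjOn (fun t => d * t / D t) (Set.Ioo (0:ℝ) 1) := by
    intro x hx y hy h
    have hx' := hDpos x hx; have hy' := hDpos y hy
    simp only at h
    rw [div_eq_div_iff hx'.ne' hy'.ne'] at h
    have hcol : d * c * x = d * c * y := by
      simp only [hD] at h; linear_combination h
    exact mul_left_cancel₀ (by positivity) hcol
  have himg : (fun t => d * t / D t) '' Set.Ioo (0:ℝ) 1 = Set.Ioo (0:ℝ) 1 := by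
    ext u
    simp only [Set.mem_image, Set.mem_Ioo]
    constructor
    · rintro ⟨t, ht, rfl⟩
      have hDt := hDpos t ⟨ht.1, ht.2⟩
      refine ⟨div_pos (mul_pos hd ht.1) hDt, ?_⟩
      rw [div_lt_one hDt]
      have := mul_pos (sub_pos.2 ht.2) hc
      simp only [hD]; linarith
    · intro hu
      have hE : 0 < (1 - u) * d + u * c := by
        have := mul_pos (sub_pos.2 hu.2) hd
        have := mul_pos hu.1 hc
        linarith
      refine ⟨c * u / ((1 - u) * d + u * c), ⟨div_pos (mul_pos hc hu.1) hE, ?_⟩, ?_⟩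
      · rw [div_lt_one hE]
        have := mul_pos (sub_pos.2 hu.2) hd
        linarith
      · have ht0 : c * u / ((1 - u) * d + u * c) ∈ Set.Ioo (0:ℝ) 1 := by
          refine ⟨div_pos (mul_pos hc hu.1) hE, ?_⟩
          rw [div_lt_one hE]
          have := mul_pos (sub_pos.2 hu.2) hd
          linarith
        have hDt0 := hDpos _ ht0
        rw [div_eq_iff hDt0.ne']
        simp only [hD]
        have hE2 : d * (1 - u) + c * u ≠ 0 := by linarith
        field_simp
        ring
  have key := integral_image_eq_integral_abs_deriv_smul measurableSet_Ioo hderiv hinj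
    (fun u : ℝ => u ^ (l - 1) * (1 - u) ^ (-l))
  rw [himg] at key
  have hlhs : ∫ u in Set.Ioo (0:ℝ) 1, u ^ (l - 1) * (1 - u) ^ (-l) = π / Real.sin (π * l) := by
    rw [← MeasureTheory.integral_Ioc_eq_integral_Ioo,
      ← intervalIntegral.integral_of_le zero_le_one, beta_reflect ⟨hl0, hl1⟩]
  have hrhs : ∫ t in Set.Ioo (0:ℝ) 1,
      |c * d / (D t) ^ 2| • ((d * t / D t) ^ (l - 1) * (1 - d * t / D t) ^ (-l)) =
      c ^ (1 - l) * d ^ l * ∫ t in Set.Ioo (0:ℝ) 1,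
        t ^ (l - 1) * (1 - t) ^ (-l) * (D t)⁻¹ := by
    rw [← MeasureTheory.integral_const_mul]
    apply MeasureTheory.setIntegral_congr_fun measurableSet_Ioo
    intro t ht
    have hDt := hDpos t ht
    have h1t : (1 : ℝ) - d * t / D t = c * (1 - t) / D t := by
      rw [eq_div_iff hDt.ne']
      simp only [hD]
      have hDt' : (1 - t) * c + d * t ≠ 0 := by linarith [hDt]
      field_simp
      ring
    simp only [smul_eq_mul]
    rw [h1t,
      aux_pointwise c d t (1 - t) (D t) l hc hd ht.1 (by linarith [ht.2]) hDt]
  rw [hlhs, hrhs] at key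
  have hint : ∫ t in (0:ℝ)..1, t ^ (l - 1) * (1 - t) ^ (-l) * ((1 - t) * c + t * d)⁻¹ =
      ∫ t in Set.Ioo (0:ℝ) 1, t ^ (l - 1) * (1 - t) ^ (-l) * (D t)⁻¹ := by
    rw [intervalIntegral.integral_of_le zero_le_one, MeasureTheory.integral_Ioc_eq_integral_Ioo]
  have hc1 : c ^ (l - 1) = (c ^ (1 - l))⁻¹ := by
    rw [show l - 1 = -(1 - l) by ring, Real.rpow_neg hc.le]
  have hd1 : d ^ (-l) = (d ^ l)⁻¹ := by rw [Real.rpow_neg hd.le]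
  have h1 : (0:ℝ) < c ^ (1 - l) := Real.rpow_pos_of_pos hc _
  have h2 : (0:ℝ) < d ^ l := Real.rpow_pos_of_pos hd _
  rw [hint, hc1, hd1, key]
  field_simp

theorem ag_difference_integral (a b l : ℝ) (ha : 0 < a) (hb : 0 < b)
    (hl : l ∈ Set.Ioo (0:ℝ) 1) :
    (1 - l) * a + l * b - a ^ (1 - l) * b ^ l =
      (Real.sin (Real.pi * l) / Real.pi) *
        ∫ t in (0:ℝ)..1,
          t ^ (l - 1) * (1 - t) ^ (-l) *
            ((1 - t) * a + t * b - ((1 - t) / a + t / b)⁻¹) := by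
  obtain ⟨hl0, hl1⟩ := hl
  have hπ := Real.pi_pos
  have hsin : 0 < Real.sin (π * l) :=
    Real.sin_pos_of_pos_of_lt_pi (by positivity) (by nlinarith)
  have i1 : IntervalIntegrable (fun t : ℝ => t ^ (l - 1) * (1 - t) ^ (1 - l)) volume 0 1 := by
    have := betaIntegrand_integrable hl0 (show (0:ℝ) < 2 - l by linarith)
    simpa [show (2:ℝ) - l - 1 = 1 - l by ring] using this
  have i2 : IntervalIntegrable (fun t : ℝ => t ^ l * (1 - t) ^ (-l)) volume 0 1 := by
    have := betaIntegrand_integrable (show (0:ℝ) < l + 1 by linarith)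
      (show (0:ℝ) < 1 - l by linarith)
    simpa [show l + 1 - (1:ℝ) = l by ring, show (1:ℝ) - l - 1 = -l by ring] using this
  have ibeta : IntervalIntegrable (fun t : ℝ => t ^ (l - 1) * (1 - t) ^ (-l)) volume 0 1 := by
    have := betaIntegrand_integrable hl0 (show (0:ℝ) < 1 - l by linarith)
    simpa [show (1:ℝ) - l - 1 = -l by ring] using this
  have hEpos : ∀ t : ℝ, 0 ≤ t → t ≤ 1 → 0 < (1 - t) * b + t * a := by
    intro t h0 h1
    rcases eq_or_lt_of_le h0 with rfl | h0'
    · simpa using hb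
    · have := mul_nonneg (by linarith : (0:ℝ) ≤ 1 - t) hb.le
      have := mul_pos h0' ha
      linarith
  have hHpos : ∀ t : ℝ, 0 ≤ t → t ≤ 1 → 0 < (1 - t) / a + t / b := by
    intro t h0 h1
    rcases eq_or_lt_of_le h0 with rfl | h0'
    · simp; positivity
    · have := div_nonneg (by linarith : (0:ℝ) ≤ 1 - t) ha.le
      have := div_pos h0' hb
      linarith
  have i3 : IntervalIntegrable
      (fun t : ℝ => t ^ (l - 1) * (1 - t) ^ (-l) * ((1 - t) / a + t / b)⁻¹) volume 0 1 := by
    apply ibeta.mul_continuousOn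
    apply ContinuousOn.inv₀ (by fun_prop)
    intro x hx
    rw [Set.uIcc_of_le zero_le_one] at hx
    exact (hHpos x hx.1 hx.2).ne'
  have hsplit : (∫ t in (0:ℝ)..1, t ^ (l - 1) * (1 - t) ^ (-l) *
        ((1 - t) * a + t * b - ((1 - t) / a + t / b)⁻¹))
      = (a * ∫ t in (0:ℝ)..1, t ^ (l - 1) * (1 - t) ^ (1 - l))
        + (b * ∫ t in (0:ℝ)..1, t ^ l * (1 - t) ^ (-l))
        - ∫ t in (0:ℝ)..1, t ^ (l - 1) * (1 - t) ^ (-l) * ((1 - t) / a + t / b)⁻¹ := by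
    rw [← intervalIntegral.integral_const_mul, ← intervalIntegral.integral_const_mul,
        ← intervalIntegral.integral_add (i1.const_mul a) (i2.const_mul b),
        ← intervalIntegral.integral_sub ((i1.const_mul a).add (i2.const_mul b)) i3]
    apply intervalIntegral.integral_congr
    intro t ht
    rw [Set.uIcc_of_le zero_le_one] at ht
    obtain ⟨h0, h1⟩ := ht
    rcases eq_or_lt_of_le h0 with rfl | h0'
    · norm_num [Real.zero_rpow (show l - 1 ≠ 0 by linarith),
        Real.zero_rpow hl0.ne']
    rcases eq_or_lt_of_le h1 with rfl | h1'
    · norm_num [Real.zero_rpow (show -l ≠ 0 by simpa using hl0.ne'),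
        Real.zero_rpow (show 1 - l ≠ 0 by linarith)]
    · have e1 : t ^ l = t ^ (l - 1) * t := by
        have := Real.rpow_add_one h0'.ne' (l - 1)
        simpa [sub_add_cancel] using this
      have e2 : (1 - t) ^ (1 - l) = (1 - t) ^ (-l) * (1 - t) := by
        have := Real.rpow_add_one (show (1:ℝ) - t ≠ 0 by linarith) (-l)
        simpa [neg_add_eq_sub] using this
      simp only [e1, e2]
      ring
  have v1 : ∫ t in (0:ℝ)..1, t ^ (l - 1) * (1 - t) ^ (1 - l)
      = (1 - l) * (π / Real.sin (π * l)) := by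
    have h := real_betaIntegral hl0 (show (0:ℝ) < 2 - l by linarith)
    rw [show (2:ℝ) - l - 1 = 1 - l by ring, show l + (2 - l) = (2:ℝ) by ring] at h
    rw [h, Real.Gamma_two, div_one, show (2:ℝ) - l = (1 - l) + 1 by ring,
      Real.Gamma_add_one (show (1:ℝ) - l ≠ 0 by linarith), ← mul_assoc,
      mul_comm (Real.Gamma l) (1 - l), mul_assoc, Real.Gamma_mul_Gamma_one_sub]
  have v2 : ∫ t in (0:ℝ)..1, t ^ l * (1 - t) ^ (-l)
      = l * (π / Real.sin (π * l)) := by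
    have h := real_betaIntegral (show (0:ℝ) < l + 1 by linarith)
      (show (0:ℝ) < 1 - l by linarith)
    rw [show l + 1 - (1:ℝ) = l by ring, show (1:ℝ) - l - 1 = -l by ring,
      show l + 1 + (1 - l) = (2:ℝ) by ring] at h
    rw [h, Real.Gamma_two, div_one, Real.Gamma_add_one hl0.ne', mul_assoc,
      Real.Gamma_mul_Gamma_one_sub]
  have v3 : ∫ t in (0:ℝ)..1, t ^ (l - 1) * (1 - t) ^ (-l) * ((1 - t) / a + t / b)⁻¹
      = a ^ (1 - l) * b ^ l * (π / Real.sin (π * l)) := by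
    have hcong : ∫ t in (0:ℝ)..1, t ^ (l - 1) * (1 - t) ^ (-l) * ((1 - t) / a + t / b)⁻¹
        = ∫ t in (0:ℝ)..1, (a * b) *
            (t ^ (l - 1) * (1 - t) ^ (-l) * ((1 - t) * b + t * a)⁻¹) := by
      apply intervalIntegral.integral_congr
      intro t ht
      rw [Set.uIcc_of_le zero_le_one] at ht
      have hE := hEpos t ht.1 ht.2
      have hH : (1 - t) / a + t / b = ((1 - t) * b + t * a) / (a * b) := by
        field_simp
      simp only [hH, inv_div]
      field_simp
    rw [hcong, intervalIntegral.integral_const_mul, harm_integral ⟨hl0, hl1⟩ hb ha]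
    have ea : a ^ (1 - l) = a * a ^ (-l) := by
      have := Real.rpow_add_one ha.ne' (-l)
      rw [neg_add_eq_sub] at this
      rw [this]; ring
    have eb : b ^ l = b * b ^ (l - 1) := by
      have := Real.rpow_add_one hb.ne' (l - 1)
      rw [sub_add_cancel] at this
      rw [this]; ring
    rw [ea, eb]; ring
  rw [hsplit, v1, v2, v3]
  have hsin' : Real.sin (l * π) ≠ 0 := by rw [mul_comm]; exact hsin.ne'
  field_simp
end
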